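/- arXiv:2012.04711 — 4 statements merged into one kernel-verified Lean document; each statement's English description precedes it below -/
import Mathlib

section
/- The weighted Lah numbers satisfy the recurrence W(ℓ,n,m) = (n-1)·W(ℓ,n-1,m) + Σ_{j=0}^{n-1} C(n-1,j)·j!·W(ℓ-j, n-1-j, m-1), for n ≥ 1. -/
noncomputable section

open Finset

/-- The weight of a linearly ordered block (given as a list): the number of its
elements smaller than its first element. -/
def blockWeight (b : List ℕ) : ℕ := (b.filter (fun x => x < b.headI)).length

/-- `P` is a partition of `{1,…,n}` into linearly ordered blocks (nonempty lists
of distinct elements, pairwise disjoint, whose union is `{1,…,n}`). -/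
def IsOrderedPartition (n : ℕ) (P : Finset (List ℕ)) : Prop :=
  (∀ b ∈ P, b ≠ [] ∧ b.Nodup) ∧
  (∀ b₁ ∈ P, ∀ b₂ ∈ P, b₁ ≠ b₂ → ∀ x, x ∈ b₁ → x ∉ b₂) ∧
  (∀ x : ℕ, (∃ b ∈ P, x ∈ b) ↔ x ∈ Finset.Icc 1 n)

/-- The weight of an ordered partition: the sum of the weights of its blocks. -/
def partitionWeight (P : Finset (List ℕ)) : ℕ := ∑ b ∈ P, blockWeight b

/-- The weighted Lah number `W(ℓ,n,m)`: the number of partitions of `{1,…,n}`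
into exactly `m` linearly ordered blocks with total weight `ℓ`.
(It vanishes for `ℓ < 0`.) -/
def weightedLah (ℓ : ℤ) (n m : ℕ) : ℕ :=
  Set.ncard {P : Finset (List ℕ) |
    IsOrderedPartition n P ∧ P.card = m ∧ (partitionWeight P : ℤ) = ℓ}

/-- The number of cycles of a permutation of `Fin n` (fixed points count as cycles). -/
def numCycles {n : ℕ} (σ : Equiv.Perm (Fin n)) : ℕ :=
  Multiset.card σ.cycleType + (n - σ.cycleType.sum)

/-- The unsigned Stirling number of the first kind: the number of permutations of
`n` elements with exactly `m` cycles. -/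
def stirlingFirst (n m : ℕ) : ℕ :=
  Nat.card {σ : Equiv.Perm (Fin n) // numCycles σ = m}

/-- The number of descents of a permutation of `Fin m`. -/
def descentCount (m : ℕ) (σ : Equiv.Perm (Fin m)) : ℕ :=
  ((Finset.range (m - 1)).filter (fun i =>
    ((List.ofFn (fun j => (σ j : ℕ))).getD (i + 1) 0) <
      ((List.ofFn (fun j => (σ j : ℕ))).getD i 0))).card

/-- The Eulerian number `A(m,j)`: permutations of `{1,…,m}` with exactly `j` descents. -/
def eulerian (m j : ℕ) : ℕ :=
  Nat.card {σ : Equiv.Perm (Fin m) // descentCount m σ = j}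

/-- The coefficient `e_{k,n,m}` of the Ehrhart polynomial of the hypersimplex. -/
def eCoef (k n m : ℕ) : ℚ :=
  (1 / (n - 1).factorial : ℚ) *
    ∑ ℓ ∈ Finset.range k, (weightedLah ℓ n (m + 1) : ℚ) * (eulerian m (k - ℓ - 1) : ℚ)

/-- Number of lattice points of the `t`-th dilate of the hypersimplex `Δ_{k,n}`,
i.e. points of `{0,…,t}^n` with coordinate sum `k·t`. -/
def hyperCount (k n t : ℕ) : ℕ :=
  Nat.card {x : Fin n → ℤ // (∀ i, 0 ≤ x i ∧ x i ≤ (t : ℤ)) ∧ ∑ i, x i = (k : ℤ) * t}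

/-- Number of lattice points of the `t`-th dilate of the half-open hypersimplex
`Δ'_{k,n} ⊆ ℝ^{n-1}` (for `k > 1`). -/
def halfOpenCount (k n t : ℕ) : ℕ :=
  Nat.card {x : Fin (n - 1) → ℤ // (∀ i, 0 ≤ x i ∧ x i ≤ (t : ℤ)) ∧
    ((k : ℤ) - 1) * t < ∑ i, x i ∧ ∑ i, x i ≤ (k : ℤ) * t}

/-- Number of lattice points of the `t`-th dilate of the independence polytope of
`U_{k,n}`, i.e. points of `{0,…,t}^n` with coordinate sum at most `k·t`. -/
def indepCount (k n t : ℕ) : ℕ :=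
  Nat.card {x : Fin n → ℤ // (∀ i, 0 ≤ x i ∧ x i ≤ (t : ℤ)) ∧ ∑ i, x i ≤ (k : ℤ) * t}

/-- Number of lattice points of a region `S ⊆ ℝ^d`. -/
def latticeCount {d : ℕ} (S : Set (Fin d → ℝ)) : ℕ :=
  Nat.card {x : Fin d → ℤ // (fun i => (x i : ℝ)) ∈ S}


namespace WLaux

/-- ordered partition of an arbitrary finite ground set -/
def IsOPOn (T : Finset ℕ) (P : Finset (List ℕ)) : Prop :=
  (∀ b ∈ P, b ≠ [] ∧ b.Nodup) ∧
  (∀ b₁ ∈ P, ∀ b₂ ∈ P, b₁ ≠ b₂ → ∀ x, x ∈ b₁ → x ∉ b₂) ∧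
  (∀ x : ℕ, (∃ b ∈ P, x ∈ b) ↔ x ∈ T)

def WSet (ℓ : ℤ) (T : Finset ℕ) (m : ℕ) : Set (Finset (List ℕ)) :=
  {P | IsOPOn T P ∧ P.card = m ∧ (partitionWeight P : ℤ) = ℓ}

lemma weightedLah_eq (ℓ : ℤ) (n m : ℕ) :
    weightedLah ℓ n m = (WSet ℓ (Finset.Icc 1 n) m).ncard := rfl

lemma IsOPOn.block_subset {T P} (h : IsOPOn T P) {b : List ℕ} (hb : b ∈ P) :
    ∀ x ∈ b, x ∈ T := fun x hx => (h.2.2 x).1 ⟨b, hb, hx⟩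

lemma IsOPOn.block_unique {T P} (h : IsOPOn T P) {b₁ b₂ : List ℕ} (h₁ : b₁ ∈ P)
    (h₂ : b₂ ∈ P) {x : ℕ} (hx₁ : x ∈ b₁) (hx₂ : x ∈ b₂) : b₁ = b₂ := by
  by_contra hne
  exact h.2.1 b₁ h₁ b₂ h₂ hne x hx₁ hx₂

/-- all nodup lists with entries in `s` -/
def allLists (s : Finset ℕ) : Finset (List ℕ) :=
  (((s.sort (· ≤ ·)).sublists).flatMap List.permutations).toFinset

lemma mem_allLists {s : Finset ℕ} {t : List ℕ} :
    t ∈ allLists s ↔ t.Nodup ∧ ∀ x ∈ t, x ∈ s := by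
  unfold allLists
  rw [List.mem_toFinset, List.mem_flatMap]
  constructor
  · rintro ⟨u, hu, ht⟩
    rw [List.mem_sublists] at hu
    rw [List.mem_permutations] at ht
    have hnd : (s.sort (· ≤ ·)).Nodup := s.sort_nodup _
    have hund : u.Nodup := hu.nodup hnd
    refine ⟨ht.nodup_iff.2 hund, fun x hx => ?_⟩
    have : x ∈ u := ht.mem_iff.1 hx
    have : x ∈ s.sort (· ≤ ·) := hu.subset this
    exact (Finset.mem_sort _).1 this
  · rintro ⟨hnd, hsub⟩
    have hsp : List.Subperm t (s.sort (· ≤ ·)) := by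
      refine List.Nodup.subperm hnd (fun x hx => ?_)
      exact (Finset.mem_sort _).2 (hsub x hx)
    obtain ⟨u, hu1, hu2⟩ := hsp
    exact ⟨u, List.mem_sublists.2 hu2, List.mem_permutations.2 hu1.symm⟩

lemma WSet_finite (ℓ : ℤ) (T : Finset ℕ) (m : ℕ) : (WSet ℓ T m).Finite := by
  apply Set.Finite.subset ((allLists T).powerset : Finset (Finset (List ℕ))).finite_toSet
  rintro P ⟨hop, -, -⟩
  simp only [Finset.coe_powerset, Set.mem_preimage, Set.mem_powerset_iff, Finset.coe_subset]
  intro b hb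
  exact mem_allLists.2 ⟨(hop.1 b hb).2, hop.block_subset hb⟩

end WLaux

namespace WLaux

def insAfter (p a : ℕ) : List ℕ → List ℕ
  | [] => []
  | x :: xs => if x = p then x :: a :: xs else x :: insAfter p a xs

def predOf (a : ℕ) : List ℕ → ℕ
  | [] => 0
  | [_] => 0
  | x :: y :: xs => if y = a then x else predOf a (y :: xs)

lemma insAfter_perm {p a : ℕ} : ∀ {l : List ℕ}, p ∈ l → List.Perm (insAfter p a l) (a :: l)
  | [], h => absurd h List.not_mem_nil
  | x :: xs, h => by
      by_cases hx : x = p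
      · simpa [insAfter, hx] using List.Perm.swap a x (xs)
      · have hp : p ∈ xs := by
          rcases List.mem_cons.1 h with h' | h'
          · exact absurd h'.symm hx
          · exact h'
        have := insAfter_perm (a := a) hp
        simpa [insAfter, hx] using (this.cons x).trans (List.Perm.swap a x xs)

lemma insAfter_headI {p a : ℕ} : ∀ {l : List ℕ}, (insAfter p a l).headI = l.headI
  | [] => rfl
  | x :: xs => by by_cases hx : x = p <;> simp [insAfter, hx]

lemma insAfter_erase {p a : ℕ} : ∀ {l : List ℕ}, a ∉ l → (insAfter p a l).erase a = l
  | [], _ => rfl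
  | x :: xs, h => by
      have hxa : x ≠ a := fun h' => h (h' ▸ List.mem_cons_self)
      have hax : a ∉ xs := fun h' => h (List.mem_cons_of_mem _ h')
      by_cases hx : x = p
      · simp only [insAfter, hx, if_true]
        rw [hx] at hxa
        simp [List.erase_cons, hxa]
      · simp only [insAfter, hx, if_false]
        simp [List.erase_cons, hxa, insAfter_erase hax]

lemma insAfter_ne_nil {p a : ℕ} {l : List ℕ} (hp : p ∈ l) : insAfter p a l ≠ [] := by
  intro h
  have := (insAfter_perm (a := a) hp).length_eq
  simp [h] at this

lemma headI_mem' : ∀ {l : List ℕ}, l ≠ [] → l.headI ∈ l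
  | [], h => absurd rfl h
  | x :: xs, _ => List.mem_cons_self

lemma predOf_insAfter {a : ℕ} : ∀ {l : List ℕ} {p : ℕ}, a ∉ l → p ∈ l →
    predOf a (insAfter p a l) = p
  | [], p, _, hp => absurd hp List.not_mem_nil
  | x :: xs, p, ha, hp => by
      have hax : a ∉ xs := fun h' => ha (List.mem_cons_of_mem _ h')
      by_cases hx : x = p
      · simp [insAfter, hx, predOf]
      · have hpxs : p ∈ xs := by
          rcases List.mem_cons.1 hp with h' | h'
          · exact absurd h'.symm hx
          · exact h'
        have hne := insAfter_ne_nil (a := a) hpxs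
        obtain ⟨y, ys, hys⟩ := List.exists_cons_of_ne_nil hne
        have hxsne : xs ≠ [] := by rintro rfl; simp at hpxs
        have hyhead : y = xs.headI := by
          have := insAfter_headI (p := p) (a := a) (l := xs)
          rw [hys] at this; simpa using this
        have hya : y ≠ a := by
          intro h
          subst h
          have : y ∈ xs := hyhead ▸ headI_mem' hxsne
          exact hax this
        simp only [insAfter, hx, if_false, hys, predOf, hya, if_false]
        rw [← hys, predOf_insAfter hax hpxs]

lemma headI_erase {a : ℕ} : ∀ {l : List ℕ}, l.headI ≠ a → (l.erase a).headI = l.headI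
  | [], _ => rfl
  | x :: xs, h => by
      have hxa : x ≠ a := by simpa using h
      simp [List.erase_cons, hxa]

lemma reconstruct {a : ℕ} : ∀ {b : List ℕ}, b.Nodup → a ∈ b → b.headI ≠ a →
    predOf a b ∈ b ∧ predOf a b ≠ a ∧ insAfter (predOf a b) a (b.erase a) = b := by
  intro b
  induction b with
  | nil => intro _ h; exact absurd h List.not_mem_nil
  | cons x xs ih =>
    intro hnd hmem hh
    have hxa : x ≠ a := by simpa using hh
    have haxs : a ∈ xs := by
      rcases List.mem_cons.1 hmem with h' | h'
      · exact absurd h'.symm hxa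
      · exact h'
    have hxsne : xs ≠ [] := by rintro rfl; simp at haxs
    obtain ⟨y, ys, rfl⟩ := List.exists_cons_of_ne_nil hxsne
    have hnd' : (y :: ys).Nodup := hnd.of_cons
    have hxnotin : x ∉ y :: ys := (List.nodup_cons.1 hnd).1
    by_cases hy : y = a
    · subst hy
      refine ⟨by simp [predOf], by simp [predOf]; exact hxa, ?_⟩
      have h1 : (x :: y :: ys).erase y = x :: ys := by simp [List.erase_cons, hxa]
      have h2 : predOf y (x :: y :: ys) = x := by simp [predOf]
      rw [h1, h2, insAfter, if_pos rfl]
    · have hays : a ∈ ys := by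
        rcases List.mem_cons.1 haxs with h' | h'
        · exact absurd h'.symm hy
        · exact h'
      have hhead' : (y :: ys).headI ≠ a := by simpa using hy
      obtain ⟨h1, h2, h3⟩ := ih hnd' haxs hhead'
      have hpred : predOf a (x :: y :: ys) = predOf a (y :: ys) := by
        simp [predOf, hy]
      refine ⟨by rw [hpred]; exact List.mem_cons_of_mem _ h1, hpred ▸ h2, ?_⟩
      have hxp : x ≠ predOf a (y :: ys) := fun h => hxnotin (h ▸ h1)
      rw [hpred, List.erase_cons, if_neg (by simpa using hxa)]
      show insAfter _ a (x :: (y :: ys).erase a) = _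
      rw [insAfter, if_neg hxp, h3]

lemma blockWeight_erase {a : ℕ} {b : List ℕ} (hmem : a ∈ b) (hh : b.headI ≠ a)
    (hlt : ¬ a < b.headI) : blockWeight (b.erase a) = blockWeight b := by
  have hperm : List.Perm b (a :: b.erase a) := List.perm_cons_erase hmem
  have hhead := headI_erase hh
  unfold blockWeight
  rw [hhead]
  have := (hperm.filter (fun x => decide (x < b.headI))).length_eq
  rw [List.filter_cons] at this
  rw [this]
  simp [hlt]

lemma blockWeight_insAfter {p a : ℕ} {l : List ℕ} (hp : p ∈ l)
    (hlt : ¬ a < l.headI) : blockWeight (insAfter p a l) = blockWeight l := by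
  unfold blockWeight
  rw [insAfter_headI]
  have := ((insAfter_perm (a := a) hp).filter (fun x => decide (x < l.headI))).length_eq
  rw [List.filter_cons] at this
  rw [this]
  simp [hlt]

lemma blockWeight_cons_of_lt {a : ℕ} {t : List ℕ} (h : ∀ x ∈ t, x < a) :
    blockWeight (a :: t) = t.length := by
  unfold blockWeight
  simp only [List.headI_cons, List.filter_cons, lt_irrefl]
  rw [if_neg (by simp), List.filter_eq_self.2 (fun x hx => by simp [h x hx])]

lemma mem_insAfter {p a : ℕ} {l : List ℕ} (hp : p ∈ l) {x : ℕ} :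
    x ∈ insAfter p a l ↔ x = a ∨ x ∈ l := by
  rw [(insAfter_perm (a := a) hp).mem_iff, List.mem_cons]

lemma nodup_insAfter {p a : ℕ} {l : List ℕ} (hp : p ∈ l) (ha : a ∉ l) (hnd : l.Nodup) :
    (insAfter p a l).Nodup := by
  rw [(insAfter_perm (a := a) hp).nodup_iff]
  exact List.nodup_cons.2 ⟨ha, hnd⟩

end WLaux

namespace WLaux

lemma cons_headI_tail' : ∀ {l : List ℕ}, l ≠ [] → l.headI :: l.tail = l
  | [], h => absurd rfl h
  | _ :: _, _ => rfl

def blkOf (x : ℕ) (P : Finset (List ℕ)) : List ℕ :=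
  if h : ∃ b ∈ P, x ∈ b then h.choose else []

lemma blkOf_mem {x : ℕ} {P : Finset (List ℕ)} (h : ∃ b ∈ P, x ∈ b) :
    blkOf x P ∈ P ∧ x ∈ blkOf x P := by
  rw [blkOf, dif_pos h]; exact ⟨h.choose_spec.1, h.choose_spec.2⟩

lemma blkOf_eq {T P} (hop : IsOPOn T P) {b : List ℕ} (hb : b ∈ P) {x : ℕ} (hx : x ∈ b) :
    blkOf x P = b := by
  have h : ∃ b ∈ P, x ∈ b := ⟨b, hb, hx⟩
  obtain ⟨h1, h2⟩ := blkOf_mem h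
  exact hop.block_unique h1 hb h2 hx

/-- classification of a partition according to the role of `n` -/
def cls (n : ℕ) (P : Finset (List ℕ)) : ℕ ⊕ List ℕ :=
  if (blkOf n P).headI = n then Sum.inr (blkOf n P).tail
  else Sum.inl (predOf n (blkOf n P))

lemma eraseBlock {T : Finset ℕ} {P : Finset (List ℕ)} {b : List ℕ}
    (hop : IsOPOn T P) (hb : b ∈ P) :
    IsOPOn (T \ b.toFinset) (P.erase b) ∧ (P.erase b).card = P.card - 1 ∧
      partitionWeight P = blockWeight b + partitionWeight (P.erase b) := by
  refine ⟨⟨?_, ?_, ?_⟩, Finset.card_erase_of_mem hb, ?_⟩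
  · exact fun c hc => hop.1 c (Finset.mem_of_mem_erase hc)
  · exact fun c₁ h₁ c₂ h₂ hne x hx =>
      hop.2.1 c₁ (Finset.mem_of_mem_erase h₁) c₂ (Finset.mem_of_mem_erase h₂) hne x hx
  · intro x
    rw [Finset.mem_sdiff, List.mem_toFinset]
    constructor
    · rintro ⟨c, hc, hx⟩
      have hcP := Finset.mem_of_mem_erase hc
      have hcb : c ≠ b := (Finset.mem_erase.1 hc).1
      exact ⟨hop.block_subset hcP x hx, fun hxb => hop.2.1 c hcP b hb hcb x hx hxb⟩
    · rintro ⟨hxT, hxb⟩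
      obtain ⟨c, hc, hx⟩ := (hop.2.2 x).2 hxT
      refine ⟨c, Finset.mem_erase.2 ⟨?_, hc⟩, hx⟩
      rintro rfl; exact hxb hx
  · exact (Finset.add_sum_erase P blockWeight hb).symm

lemma insertBlock {T : Finset ℕ} {Q : Finset (List ℕ)} {c : List ℕ}
    (hop : IsOPOn T Q) (hc1 : c ≠ []) (hc2 : c.Nodup) (hc3 : ∀ x ∈ c, x ∉ T) :
    c ∉ Q ∧ IsOPOn (T ∪ c.toFinset) (insert c Q) ∧ (insert c Q).card = Q.card + 1 ∧
      partitionWeight (insert c Q) = blockWeight c + partitionWeight Q := by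
  have hcQ : c ∉ Q := by
    intro hcQ
    obtain ⟨x, hx⟩ := List.exists_mem_of_ne_nil c hc1
    exact hc3 x hx (hop.block_subset hcQ x hx)
  refine ⟨hcQ, ⟨?_, ?_, ?_⟩, Finset.card_insert_of_notMem hcQ, Finset.sum_insert hcQ⟩
  · intro d hd
    rcases Finset.mem_insert.1 hd with rfl | hd
    · exact ⟨hc1, hc2⟩
    · exact hop.1 d hd
  · intro d₁ h₁ d₂ h₂ hne x hx
    rcases Finset.mem_insert.1 h₁ with h₁' | h₁' <;> rcases Finset.mem_insert.1 h₂ with h₂' | h₂'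
    · exact absurd (h₁'.trans h₂'.symm) hne
    · subst h₁'; exact fun hx₂ => hc3 x hx (hop.block_subset h₂' x hx₂)
    · subst h₂'; exact fun hx₂ => hc3 x hx₂ (hop.block_subset h₁' x hx)
    · exact hop.2.1 d₁ h₁' d₂ h₂' hne x hx
  · intro x
    rw [Finset.mem_union, List.mem_toFinset]
    constructor
    · rintro ⟨d, hd, hx⟩
      rcases Finset.mem_insert.1 hd with rfl | hd
      · exact Or.inr hx
      · exact Or.inl (hop.block_subset hd x hx)
    · rintro (hxT | hxc)
      · obtain ⟨d, hd, hx⟩ := (hop.2.2 x).2 hxT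
        exact ⟨d, Finset.mem_insert_of_mem hd, hx⟩
      · exact ⟨c, Finset.mem_insert_self c Q, hxc⟩

lemma ncard_eq_of_maps {α : Type*} {S T : Set α} {g φ : α → α}
    (h1 : ∀ x ∈ S, g x ∈ T ∧ φ (g x) = x) (h2 : ∀ y ∈ T, φ y ∈ S ∧ g (φ y) = y) :
    S.ncard = T.ncard := by
  have hinj : Set.InjOn g S := fun x hx y hy hxy => by
    rw [← (h1 x hx).2, ← (h1 y hy).2, hxy]
  have himg : g '' S = T := by
    ext y
    constructor
    · rintro ⟨x, hx, rfl⟩; exact (h1 x hx).1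
    · intro hy; exact ⟨φ y, (h2 y hy).1, (h2 y hy).2⟩
  rw [← himg, Set.ncard_image_of_injOn hinj]

end WLaux
namespace WLaux

def gA (n : ℕ) (P : Finset (List ℕ)) : Finset (List ℕ) :=
  insert ((blkOf n P).erase n) (P.erase (blkOf n P))

def phiA (p n : ℕ) (Q : Finset (List ℕ)) : Finset (List ℕ) :=
  insert (insAfter p n (blkOf p Q)) (Q.erase (blkOf p Q))

lemma claimA1 {ℓ : ℤ} {n m p : ℕ} (hn : 1 ≤ n) {P : Finset (List ℕ)}
    (hP : P ∈ WSet ℓ (Finset.Icc 1 n) m) (hcls : cls n P = Sum.inl p) :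
    gA n P ∈ WSet ℓ (Finset.Icc 1 (n - 1)) m ∧ phiA p n (gA n P) = P := by
  obtain ⟨hop, hcard, hwt⟩ := hP
  have hnIcc : n ∈ Finset.Icc 1 n := by rw [Finset.mem_Icc]; omega
  have hex : ∃ b ∈ P, n ∈ b := (hop.2.2 n).2 hnIcc
  set b := blkOf n P with hbdef
  obtain ⟨hbP, hnb⟩ := blkOf_mem hex
  have hbne : b ≠ [] := (hop.1 b hbP).1
  have hbnd : b.Nodup := (hop.1 b hbP).2
  have hh : b.headI ≠ n := by
    intro h
    rw [cls, ← hbdef, if_pos h] at hcls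
    simp at hcls
  have hpeq : predOf n b = p := by
    rw [cls, ← hbdef, if_neg hh] at hcls
    exact Sum.inl.inj hcls
  obtain ⟨hpb, hpn, hins⟩ := reconstruct hbnd hnb hh
  have hheadb : b.headI ∈ b := headI_mem' hbne
  have hbsub : ∀ x ∈ b, x ∈ Finset.Icc 1 n := hop.block_subset hbP
  obtain ⟨hop₀, hcard₀, hwt₀⟩ := eraseBlock hop hbP
  set c : List ℕ := b.erase n with hcdef
  have hheadc : b.headI ∈ c := (hbnd.mem_erase_iff).2 ⟨hh, hheadb⟩
  have hcne : c ≠ [] := fun h => by rw [h] at hheadc; exact List.not_mem_nil hheadc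
  have hcnd : c.Nodup := hbnd.erase n
  have hcsub : ∀ x ∈ c, x ∈ b := fun x hx => ((hbnd.mem_erase_iff).1 hx).2
  have hnc : n ∉ c := fun h => ((hbnd.mem_erase_iff).1 h).1 rfl
  have hcnotT : ∀ x ∈ c, x ∉ Finset.Icc 1 n \ b.toFinset := by
    intro x hx hmem
    rw [Finset.mem_sdiff, List.mem_toFinset] at hmem
    exact hmem.2 (hcsub x hx)
  obtain ⟨hcQ, hop₁, hcard₁, hwt₁⟩ := insertBlock hop₀ hcne hcnd hcnotT
  have hground : (Finset.Icc 1 n \ b.toFinset) ∪ c.toFinset = Finset.Icc 1 (n - 1) := by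
    ext x
    simp only [Finset.mem_union, Finset.mem_sdiff, List.mem_toFinset, Finset.mem_Icc, hcdef,
      hbnd.mem_erase_iff]
    constructor
    · rintro (⟨⟨h1, h2⟩, h3⟩ | ⟨hxn, hxb⟩)
      · have : x ≠ n := fun h => h3 (h ▸ hnb)
        omega
      · have := hbsub x hxb
        rw [Finset.mem_Icc] at this
        omega
    · intro hx
      by_cases hxb : x ∈ b
      · exact Or.inr ⟨by omega, hxb⟩
      · exact Or.inl ⟨⟨hx.1, by omega⟩, hxb⟩
  rw [hground] at hop₁
  have hcP' : c ∉ P.erase b := by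
    intro hc
    have hcmem : c ∈ P := Finset.mem_of_mem_erase hc
    have : c = b := hop.block_unique hcmem hbP hheadc hheadb
    rw [this] at hc
    exact (Finset.mem_erase.1 hc).1 rfl
  have hnlt : ¬ n < b.headI := by
    have := hbsub _ hheadb
    rw [Finset.mem_Icc] at this
    omega
  have hbw : blockWeight c = blockWeight b := blockWeight_erase hnb hh hnlt
  have hpweq : partitionWeight (insert c (P.erase b)) = partitionWeight P := by
    rw [hwt₁, hbw, hwt₀]
  have hm1 : 1 ≤ P.card := Finset.card_pos.2 ⟨b, hbP⟩
  have hopG : IsOPOn (Finset.Icc 1 (n - 1)) (gA n P) := hop₁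
  constructor
  · refine ⟨hopG, ?_, ?_⟩
    · show (insert c (P.erase b)).card = m
      rw [hcard₁, hcard₀]
      omega
    · show ((partitionWeight (insert c (P.erase b)) : ℕ) : ℤ) = ℓ
      rw [hpweq]
      exact hwt
  · have hpc : p ∈ c := (hbnd.mem_erase_iff).2 ⟨hpeq ▸ hpn, hpeq ▸ hpb⟩
    have hblk : blkOf p (gA n P) = c := blkOf_eq hopG (Finset.mem_insert_self _ _) hpc
    show insert (insAfter p n (blkOf p (gA n P))) ((gA n P).erase (blkOf p (gA n P))) = P
    rw [hblk]
    have h1 : insAfter p n c = b := by rw [← hpeq]; exact hins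
    have h2 : (gA n P).erase c = P.erase b := Finset.erase_insert hcP'
    rw [h1, h2, Finset.insert_erase hbP]

lemma claimA2 {ℓ : ℤ} {n m p : ℕ} (hn : 1 ≤ n) (hp : p ∈ Finset.Icc 1 (n - 1))
    {Q : Finset (List ℕ)} (hQ : Q ∈ WSet ℓ (Finset.Icc 1 (n - 1)) m) :
    (phiA p n Q ∈ WSet ℓ (Finset.Icc 1 n) m ∧ cls n (phiA p n Q) = Sum.inl p) ∧
      gA n (phiA p n Q) = Q := by
  obtain ⟨hop, hcard, hwt⟩ := hQ
  have hex : ∃ c ∈ Q, p ∈ c := (hop.2.2 p).2 hp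
  set c := blkOf p Q with hcdef
  obtain ⟨hcQ, hpc⟩ := blkOf_mem hex
  have hcne : c ≠ [] := (hop.1 c hcQ).1
  have hcnd : c.Nodup := (hop.1 c hcQ).2
  have hcsub : ∀ x ∈ c, x ∈ Finset.Icc 1 (n - 1) := hop.block_subset hcQ
  have hnc : n ∉ c := by
    intro h
    have := hcsub n h
    rw [Finset.mem_Icc] at this
    omega
  set d := insAfter p n c with hddef
  have hdne : d ≠ [] := insAfter_ne_nil hpc
  have hdnd : d.Nodup := nodup_insAfter hpc hnc hcnd
  have hdhead : d.headI = c.headI := insAfter_headI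
  have hmemd : ∀ x, x ∈ d ↔ x = n ∨ x ∈ c := fun x => mem_insAfter hpc
  obtain ⟨hop₀, hcard₀, hwt₀⟩ := eraseBlock hop hcQ
  have hdnotT : ∀ x ∈ d, x ∉ Finset.Icc 1 (n - 1) \ c.toFinset := by
    intro x hx hmem
    rw [Finset.mem_sdiff, List.mem_toFinset] at hmem
    rcases (hmemd x).1 hx with rfl | hxc
    · rw [Finset.mem_Icc] at hmem
      omega
    · exact hmem.2 hxc
  obtain ⟨hdQ', hop₁, hcard₁, hwt₁⟩ := insertBlock hop₀ hdne hdnd hdnotT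
  have hground : (Finset.Icc 1 (n - 1) \ c.toFinset) ∪ d.toFinset = Finset.Icc 1 n := by
    ext x
    simp only [Finset.mem_union, Finset.mem_sdiff, List.mem_toFinset, Finset.mem_Icc]
    rw [hmemd x]
    constructor
    · rintro (⟨⟨h1, h2⟩, _⟩ | (rfl | hxc))
      · omega
      · omega
      · have := hcsub x hxc
        rw [Finset.mem_Icc] at this
        omega
    · intro hx
      by_cases hxn : x = n
      · exact Or.inr (Or.inl hxn)
      · by_cases hxc : x ∈ c
        · exact Or.inr (Or.inr hxc)
        · exact Or.inl ⟨⟨hx.1, by omega⟩, hxc⟩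
  rw [hground] at hop₁
  have hopG : IsOPOn (Finset.Icc 1 n) (phiA p n Q) := hop₁
  have hnlt : ¬ n < c.headI := by
    have h := hcsub c.headI (headI_mem' hcne)
    rw [Finset.mem_Icc] at h
    omega
  have hwd : blockWeight d = blockWeight c := blockWeight_insAfter hpc hnlt
  have hnd' : n ∈ d := (hmemd n).2 (Or.inl rfl)
  have hblk : blkOf n (phiA p n Q) = d := blkOf_eq hopG (Finset.mem_insert_self _ _) hnd'
  have hhd : d.headI ≠ n := by
    rw [hdhead]
    intro h
    exact hnc (h ▸ headI_mem' hcne)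
  refine ⟨⟨⟨hopG, ?_, ?_⟩, ?_⟩, ?_⟩
  · show (insert d (Q.erase c)).card = m
    have : 1 ≤ Q.card := Finset.card_pos.2 ⟨c, hcQ⟩
    rw [hcard₁, hcard₀]
    omega
  · show ((partitionWeight (insert d (Q.erase c)) : ℕ) : ℤ) = ℓ
    have : partitionWeight (insert d (Q.erase c)) = partitionWeight Q := by
      rw [hwt₁, hwd, hwt₀]
    rw [this]
    exact hwt
  · rw [cls, hblk, if_neg hhd, hddef, predOf_insAfter hnc hpc]
  · show insert ((blkOf n (phiA p n Q)).erase n) ((phiA p n Q).erase (blkOf n (phiA p n Q))) = Q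
    rw [hblk]
    have h1 : d.erase n = c := insAfter_erase hnc
    have h2 : (phiA p n Q).erase d = Q.erase c := Finset.erase_insert hdQ'
    rw [h1, h2, Finset.insert_erase hcQ]

lemma fiberA {ℓ : ℤ} {n m : ℕ} (hn : 1 ≤ n) {p : ℕ} (hp : p ∈ Finset.Icc 1 (n - 1)) :
    {P | P ∈ WSet ℓ (Finset.Icc 1 n) m ∧ cls n P = Sum.inl p}.ncard
      = (WSet ℓ (Finset.Icc 1 (n - 1)) m).ncard := by
  apply ncard_eq_of_maps (g := gA n) (φ := phiA p n)
  · rintro P ⟨hP, hcls⟩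
    exact claimA1 hn hP hcls
  · intro Q hQ
    obtain ⟨⟨h1, h2⟩, h3⟩ := claimA2 hn hp hQ
    exact ⟨⟨h1, h2⟩, h3⟩

end WLaux
namespace WLaux

def gB (n : ℕ) (P : Finset (List ℕ)) : Finset (List ℕ) := P.erase (blkOf n P)

def phiB (n : ℕ) (t : List ℕ) (Q : Finset (List ℕ)) : Finset (List ℕ) := insert (n :: t) Q

lemma claimB1 {ℓ : ℤ} {n m : ℕ} {t : List ℕ} (hn : 1 ≤ n) {P : Finset (List ℕ)}
    (hP : P ∈ WSet ℓ (Finset.Icc 1 n) m) (hcls : cls n P = Sum.inr t) :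
    gB n P ∈ WSet (ℓ - t.length) (Finset.Icc 1 (n - 1) \ t.toFinset) (m - 1) ∧
      phiB n t (gB n P) = P := by
  obtain ⟨hop, hcard, hwt⟩ := hP
  have hnIcc : n ∈ Finset.Icc 1 n := by rw [Finset.mem_Icc]; omega
  have hex : ∃ b ∈ P, n ∈ b := (hop.2.2 n).2 hnIcc
  set b := blkOf n P with hbdef
  obtain ⟨hbP, hnb⟩ := blkOf_mem hex
  have hbne : b ≠ [] := (hop.1 b hbP).1
  have hbnd : b.Nodup := (hop.1 b hbP).2
  have hbsub : ∀ x ∈ b, x ∈ Finset.Icc 1 n := hop.block_subset hbP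
  have hh : b.headI = n := by
    by_contra hh
    rw [cls, ← hbdef, if_neg hh] at hcls
    simp at hcls
  have htl : b.tail = t := by
    rw [cls, ← hbdef, if_pos hh] at hcls
    exact Sum.inr.inj hcls
  have hbcons : b = n :: t := by
    conv_lhs => rw [← cons_headI_tail' hbne]
    rw [hh, htl]
  have hnt : n ∉ t := by
    intro h
    rw [hbcons] at hbnd
    exact (List.nodup_cons.1 hbnd).1 h
  have htsub : ∀ x ∈ t, x ∈ Finset.Icc 1 (n - 1) := by
    intro x hx
    have hxb : x ∈ b := hbcons ▸ List.mem_cons_of_mem _ hx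
    have := hbsub x hxb
    rw [Finset.mem_Icc] at this ⊢
    have hxn : x ≠ n := fun h => hnt (h ▸ hx)
    omega
  obtain ⟨hop₀, hcard₀, hwt₀⟩ := eraseBlock hop hbP
  have hground : Finset.Icc 1 n \ b.toFinset = Finset.Icc 1 (n - 1) \ t.toFinset := by
    ext x
    simp only [Finset.mem_sdiff, List.mem_toFinset, Finset.mem_Icc, hbcons, List.mem_cons]
    constructor
    · rintro ⟨⟨h1, h2⟩, h3⟩
      push_neg at h3
      exact ⟨⟨h1, by omega⟩, h3.2⟩
    · rintro ⟨⟨h1, h2⟩, h3⟩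
      refine ⟨⟨h1, by omega⟩, ?_⟩
      push_neg
      exact ⟨by omega, h3⟩
  rw [hground] at hop₀
  have hwb : blockWeight b = t.length := by
    rw [hbcons]
    apply blockWeight_cons_of_lt
    intro x hx
    have := htsub x hx
    rw [Finset.mem_Icc] at this
    omega
  constructor
  · refine ⟨hop₀, ?_, ?_⟩
    · show (P.erase b).card = m - 1
      rw [hcard₀, hcard]
    have : (partitionWeight P : ℤ) = (blockWeight b : ℤ) + (partitionWeight (P.erase b) : ℤ) := by
      rw [hwt₀]; push_cast; ring
    rw [show gB n P = P.erase b from rfl]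
    rw [← hwt, this, hwb]
    ring
  · show insert (n :: t) (P.erase b) = P
    rw [← hbcons, Finset.insert_erase hbP]

lemma claimB2 {ℓ : ℤ} {n m : ℕ} {t : List ℕ} (hn : 1 ≤ n) (hm : 1 ≤ m)
    (ht : t ∈ allLists (Finset.Icc 1 (n - 1))) {Q : Finset (List ℕ)}
    (hQ : Q ∈ WSet (ℓ - t.length) (Finset.Icc 1 (n - 1) \ t.toFinset) (m - 1)) :
    (phiB n t Q ∈ WSet ℓ (Finset.Icc 1 n) m ∧ cls n (phiB n t Q) = Sum.inr t) ∧
      gB n (phiB n t Q) = Q := by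
  obtain ⟨hop, hcard, hwt⟩ := hQ
  obtain ⟨htnd, htsub⟩ := mem_allLists.1 ht
  have hnt : n ∉ t := by
    intro h
    have := htsub n h
    rw [Finset.mem_Icc] at this
    omega
  set c : List ℕ := n :: t with hcdef
  have hcne : c ≠ [] := by simp [hcdef]
  have hcnd : c.Nodup := List.nodup_cons.2 ⟨hnt, htnd⟩
  have hcnotT : ∀ x ∈ c, x ∉ Finset.Icc 1 (n - 1) \ t.toFinset := by
    intro x hx hmem
    rw [Finset.mem_sdiff, List.mem_toFinset] at hmem
    rcases List.mem_cons.1 hx with rfl | hxt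
    · rw [Finset.mem_Icc] at hmem
      omega
    · exact hmem.2 hxt
  obtain ⟨hcQ, hop₁, hcard₁, hwt₁⟩ := insertBlock hop hcne hcnd hcnotT
  have hground : (Finset.Icc 1 (n - 1) \ t.toFinset) ∪ c.toFinset = Finset.Icc 1 n := by
    ext x
    simp only [Finset.mem_union, Finset.mem_sdiff, List.mem_toFinset, Finset.mem_Icc, hcdef,
      List.mem_cons]
    constructor
    · rintro (⟨⟨h1, h2⟩, _⟩ | (rfl | hxt))
      · omega
      · omega
      · have := htsub x hxt
        rw [Finset.mem_Icc] at this
        omega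
    · intro hx
      by_cases hxn : x = n
      · exact Or.inr (Or.inl hxn)
      · by_cases hxt : x ∈ t
        · exact Or.inr (Or.inr hxt)
        · exact Or.inl ⟨⟨hx.1, by omega⟩, hxt⟩
  rw [hground] at hop₁
  have hopG : IsOPOn (Finset.Icc 1 n) (phiB n t Q) := hop₁
  have hwc : blockWeight c = t.length := by
    rw [hcdef]
    apply blockWeight_cons_of_lt
    intro x hx
    have := htsub x hx
    rw [Finset.mem_Icc] at this
    omega
  have hnc : n ∈ c := List.mem_cons_self
  have hblk : blkOf n (phiB n t Q) = c := blkOf_eq hopG (Finset.mem_insert_self _ _) hnc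
  refine ⟨⟨⟨hopG, ?_, ?_⟩, ?_⟩, ?_⟩
  · show (insert c Q).card = m
    rw [hcard₁, hcard]
    omega
  · show ((partitionWeight (insert c Q) : ℕ) : ℤ) = ℓ
    rw [hwt₁]
    push_cast
    rw [hwc, hwt]
    ring
  · rw [cls, hblk, if_pos (by rw [hcdef]; rfl)]
    rw [hcdef]
    rfl
  · show (phiB n t Q).erase (blkOf n (phiB n t Q)) = Q
    rw [hblk]
    exact Finset.erase_insert hcQ

lemma fiberB {ℓ : ℤ} {n m : ℕ} (hn : 1 ≤ n) (hm : 1 ≤ m) {t : List ℕ}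
    (ht : t ∈ allLists (Finset.Icc 1 (n - 1))) :
    {P | P ∈ WSet ℓ (Finset.Icc 1 n) m ∧ cls n P = Sum.inr t}.ncard
      = (WSet (ℓ - t.length) (Finset.Icc 1 (n - 1) \ t.toFinset) (m - 1)).ncard := by
  apply ncard_eq_of_maps (g := gB n) (φ := phiB n t)
  · rintro P ⟨hP, hcls⟩
    exact claimB1 hn hP hcls
  · intro Q hQ
    obtain ⟨⟨h1, h2⟩, h3⟩ := claimB2 hn hm ht hQ
    exact ⟨⟨h1, h2⟩, h3⟩

end WLaux
namespace WLaux

lemma blockWeight_map {f : ℕ → ℕ} {T : Finset ℕ} (hmono : StrictMonoOn f ↑T) {l : List ℕ}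
    (hl : l ≠ []) (hsub : ∀ x ∈ l, x ∈ T) : blockWeight (l.map f) = blockWeight l := by
  obtain ⟨h, tl, rfl⟩ := List.exists_cons_of_ne_nil hl
  have hhT : h ∈ T := hsub h (List.mem_cons_self)
  show ((List.map f (h :: tl)).filter (fun x => x < (List.map f (h :: tl)).headI)).length
      = blockWeight (h :: tl)
  have hhead : (List.map f (h :: tl)).headI = f h := rfl
  rw [hhead]
  rw [List.filter_map]
  rw [List.length_map]
  unfold blockWeight
  congr 1
  apply List.filter_congr
  intro x hx
  simp only [Function.comp_apply, List.headI_cons]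
  exact decide_eq_decide.2 (hmono.lt_iff_lt (hsub x hx) hhT)

lemma map_injOn_lists {f : ℕ → ℕ} {T : Finset ℕ} (hinj : Set.InjOn f ↑T) :
    ∀ {l₁ l₂ : List ℕ}, (∀ x ∈ l₁, x ∈ T) → (∀ x ∈ l₂, x ∈ T) →
      l₁.map f = l₂.map f → l₁ = l₂
  | [], [], _, _, _ => rfl
  | [], _ :: _, _, _, h => by simp at h
  | _ :: _, [], _, _, h => by simp at h
  | x :: xs, y :: ys, h₁, h₂, h => by
      simp only [List.map_cons, List.cons.injEq] at h
      have hx : x = y := hinj (by simpa using h₁ x (by simp)) (by simpa using h₂ y (by simp)) h.1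
      have := map_injOn_lists hinj (fun z hz => h₁ z (List.mem_cons_of_mem _ hz))
        (fun z hz => h₂ z (List.mem_cons_of_mem _ hz)) h.2
      rw [hx, this]

lemma relabel_forward {f : ℕ → ℕ} {T U : Finset ℕ} (hbij : Set.BijOn f ↑T ↑U)
    (hmono : StrictMonoOn f ↑T) {ℓ : ℤ} {m : ℕ} {P : Finset (List ℕ)}
    (hP : P ∈ WSet ℓ T m) : P.image (List.map f) ∈ WSet ℓ U m := by
  obtain ⟨hop, hcard, hwt⟩ := hP
  have hsub : ∀ b ∈ P, ∀ x ∈ b, x ∈ T := fun b hb => hop.block_subset hb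
  refine ⟨⟨?_, ?_, ?_⟩, ?_, ?_⟩
  · intro b' hb'
    obtain ⟨b, hb, rfl⟩ := Finset.mem_image.1 hb'
    refine ⟨by simp [(hop.1 b hb).1], ?_⟩
    exact (hop.1 b hb).2.map_on
      (fun x hx y hy hxy => hbij.injOn (hsub b hb x hx) (hsub b hb y hy) hxy)
  · intro b₁' h₁ b₂' h₂ hne x hx₁ hx₂
    obtain ⟨b₁, hb₁, rfl⟩ := Finset.mem_image.1 h₁
    obtain ⟨b₂, hb₂, rfl⟩ := Finset.mem_image.1 h₂
    obtain ⟨y₁, hy₁, rfl⟩ := List.mem_map.1 hx₁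
    obtain ⟨y₂, hy₂, hfy⟩ := List.mem_map.1 hx₂
    have hyy : y₂ = y₁ := hbij.injOn (hsub b₂ hb₂ y₂ hy₂) (hsub b₁ hb₁ y₁ hy₁) hfy
    have hbb : b₁ ≠ b₂ := fun h => hne (by rw [h])
    exact hop.2.1 b₁ hb₁ b₂ hb₂ hbb y₁ hy₁ (hyy ▸ hy₂)
  · intro y
    constructor
    · rintro ⟨b', hb', hy⟩
      obtain ⟨b, hb, rfl⟩ := Finset.mem_image.1 hb'
      obtain ⟨x, hx, rfl⟩ := List.mem_map.1 hy
      exact hbij.mapsTo (hsub b hb x hx)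
    · intro hy
      obtain ⟨x, hxT, rfl⟩ := hbij.surjOn hy
      obtain ⟨b, hb, hxb⟩ := (hop.2.2 x).2 hxT
      exact ⟨b.map f, Finset.mem_image_of_mem _ hb, List.mem_map_of_mem hxb⟩
  · rw [Finset.card_image_of_injOn, hcard]
    intro b₁ h₁ b₂ h₂ h
    exact map_injOn_lists hbij.injOn (hsub b₁ h₁) (hsub b₂ h₂) h
  · have : partitionWeight (P.image (List.map f)) = partitionWeight P := by
      unfold partitionWeight
      rw [Finset.sum_image (fun b₁ h₁ b₂ h₂ h =>
        map_injOn_lists hbij.injOn (hsub b₁ h₁) (hsub b₂ h₂) h)]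
      exact Finset.sum_congr rfl fun b hb =>
        blockWeight_map hmono (hop.1 b hb).1 (hsub b hb)
    rw [this]
    exact hwt

lemma relabel {f : ℕ → ℕ} {T U : Finset ℕ} (hbij : Set.BijOn f ↑T ↑U)
    (hmono : StrictMonoOn f ↑T) (ℓ : ℤ) (m : ℕ) :
    (WSet ℓ T m).ncard = (WSet ℓ U m).ncard := by
  set g := Function.invFunOn f ↑T with hgdef
  have hInv : Set.InvOn g f ↑T ↑U := hbij.invOn_invFunOn
  have hgbij : Set.BijOn g ↑U ↑T := Set.BijOn.symm hInv.symm hbij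
  have hgmono : StrictMonoOn g ↑U := by
    intro u₁ h₁ u₂ h₂ hlt
    have hg₁ : g u₁ ∈ (T : Set ℕ) := hgbij.mapsTo h₁
    have hg₂ : g u₂ ∈ (T : Set ℕ) := hgbij.mapsTo h₂
    rcases lt_trichotomy (g u₁) (g u₂) with h | h | h
    · exact h
    · exfalso
      have := congrArg f h
      rw [hInv.2 h₁, hInv.2 h₂] at this
      omega
    · exfalso
      have := hmono hg₂ hg₁ h
      rw [hInv.2 h₁, hInv.2 h₂] at this
      omega
  have roundtrip : ∀ {V W : Finset ℕ} {u v : ℕ → ℕ}, (∀ b ∈ WSet ℓ V m, True) → True := fun _ => trivial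
  apply ncard_eq_of_maps (g := fun P => P.image (List.map f))
    (φ := fun Q => Q.image (List.map g))
  · intro P hP
    refine ⟨relabel_forward hbij hmono hP, ?_⟩
    rw [Finset.image_image]
    have heq : ∀ b ∈ P, (List.map g ∘ List.map f) b = id b := by
      intro b hb
      simp only [Function.comp_apply, id_eq, List.map_map]
      have : ∀ x ∈ b, (g ∘ f) x = x := fun x hx =>
        hInv.1 (hP.1.block_subset hb x hx)
      calc b.map (g ∘ f) = b.map id := List.map_congr_left this
        _ = b := List.map_id b
    rw [Finset.image_congr heq, Finset.image_id]
  · intro Q hQ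
    refine ⟨relabel_forward hgbij hgmono hQ, ?_⟩
    rw [Finset.image_image]
    have heq : ∀ b ∈ Q, (List.map f ∘ List.map g) b = id b := by
      intro b hb
      simp only [Function.comp_apply, id_eq, List.map_map]
      have : ∀ x ∈ b, (f ∘ g) x = x := fun x hx =>
        hInv.2 (hQ.1.block_subset hb x hx)
      calc b.map (f ∘ g) = b.map id := List.map_congr_left this
        _ = b := List.map_id b
    rw [Finset.image_congr heq, Finset.image_id]

lemma WSet_ncard_eq_weightedLah (ℓ : ℤ) (T : Finset ℕ) (m : ℕ) :
    (WSet ℓ T m).ncard = weightedLah ℓ T.card m := by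
  classical
  set L := T.sort (· ≤ ·) with hLdef
  have hlen : L.length = T.card := Finset.length_sort _
  have hsorted : L.SortedLT := Finset.sortedLT_sort T
  set f : ℕ → ℕ := fun x => L.getD (x - 1) 0 with hfdef
  have hval : ∀ {x : ℕ}, x ∈ Finset.Icc 1 T.card → ∃ h : x - 1 < L.length, f x = L[x - 1] := by
    intro x hx
    rw [Finset.mem_Icc] at hx
    have h : x - 1 < L.length := by omega
    exact ⟨h, List.getD_eq_getElem L 0 h⟩
  have hmono : StrictMonoOn f ↑(Finset.Icc 1 T.card) := by
    intro a ha b hb hab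
    rw [Finset.mem_coe, Finset.mem_Icc] at ha hb
    have h₁ : a - 1 < L.length := by omega
    have h₂ : b - 1 < L.length := by omega
    have : L.get ⟨a - 1, h₁⟩ < L.get ⟨b - 1, h₂⟩ :=
      hsorted.strictMono_get (by simp [Fin.lt_def]; omega)
    simp only [List.get_eq_getElem] at this
    have ea : f a = L[a - 1] := List.getD_eq_getElem L 0 h₁
    have eb : f b = L[b - 1] := List.getD_eq_getElem L 0 h₂
    rw [ea, eb]
    exact this
  have hbij : Set.BijOn f ↑(Finset.Icc 1 T.card) ↑T := by
    refine ⟨?_, hmono.injOn, ?_⟩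
    · intro x hx
      rw [Finset.mem_coe] at hx
      obtain ⟨h, hfx⟩ := hval hx
      rw [Finset.mem_coe, ← Finset.mem_sort (α := ℕ) (· ≤ ·), ← hLdef]
      rw [hfx]
      exact List.getElem_mem h
    · intro y hy
      rw [Finset.mem_coe, ← Finset.mem_sort (α := ℕ) (· ≤ ·), ← hLdef] at hy
      obtain ⟨i, hi, hgi⟩ := List.mem_iff_getElem.1 hy
      refine ⟨i + 1, ?_, ?_⟩
      · rw [Finset.mem_coe, Finset.mem_Icc]
        omega
      · obtain ⟨h, hfx⟩ := hval (x := i + 1) (by rw [Finset.mem_Icc]; omega)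
        rw [hfx]
        simpa using hgi
  rw [weightedLah_eq, ← relabel hbij hmono]

end WLaux
namespace WLaux

lemma card_allLists_filter_len (s : Finset ℕ) (j : ℕ) :
    ((allLists s).filter (fun t => t.length = j)).card = s.card.choose j * j.factorial := by
  classical
  have hmaps : ∀ t ∈ (allLists s).filter (fun t => t.length = j),
      t.toFinset ∈ s.powersetCard j := by
    intro t ht
    rw [Finset.mem_filter] at ht
    obtain ⟨hnd, hsub⟩ := mem_allLists.1 ht.1
    have hlen := ht.2
    rw [Finset.mem_powersetCard]
    exact ⟨fun x hx => hsub x (List.mem_toFinset.1 hx),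
      by rw [List.toFinset_card_of_nodup hnd, hlen]⟩
  rw [Finset.card_eq_sum_card_fiberwise hmaps]
  have hfib : ∀ u ∈ s.powersetCard j,
      (((allLists s).filter (fun t => t.length = j)).filter
        (fun t => t.toFinset = u)).card = j.factorial := by
    intro u hu
    rw [Finset.mem_powersetCard] at hu
    have heq : ((allLists s).filter (fun t => t.length = j)).filter (fun t => t.toFinset = u)
        = u.toList.permutations.toFinset := by
      ext r
      simp only [Finset.mem_filter, List.mem_toFinset, List.mem_permutations, mem_allLists]
      constructor
      · rintro ⟨⟨⟨hnd, hsub⟩, hlen⟩, htf⟩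
        exact List.perm_of_nodup_nodup_toFinset_eq hnd u.nodup_toList
          (by rw [htf, Finset.toList_toFinset])
      · intro hperm
        have hnd : r.Nodup := hperm.nodup_iff.2 u.nodup_toList
        have htf : r.toFinset = u := by
          rw [List.toFinset_eq_of_perm _ _ hperm, Finset.toList_toFinset]
        have hlen : r.length = j := by
          rw [hperm.length_eq, Finset.length_toList, hu.2]
        refine ⟨⟨⟨hnd, fun x hx => ?_⟩, hlen⟩, htf⟩
        have : x ∈ r.toFinset := List.mem_toFinset.2 hx
        rw [htf] at this
        exact hu.1 this
    rw [heq, List.toFinset_card_of_nodup (List.nodup_permutations _ u.nodup_toList),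
      List.length_permutations, Finset.length_toList, hu.2]
  rw [Finset.sum_congr rfl hfib, Finset.sum_const, Finset.card_powersetCard, smul_eq_mul]

lemma main_recurrence (ℓ : ℤ) (n m : ℕ) (hn : 1 ≤ n) (hm : 1 ≤ m) :
    weightedLah ℓ n m =
      (n - 1) * weightedLah ℓ (n - 1) m +
        ∑ j ∈ Finset.range n,
          (n - 1).choose j * j.factorial * weightedLah (ℓ - (j : ℤ)) (n - 1 - j) (m - 1) := by
  classical
  have hfin := WSet_finite ℓ (Finset.Icc 1 n) m
  have hncard : weightedLah ℓ n m = hfin.toFinset.card := by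
    rw [weightedLah_eq, Set.ncard_eq_toFinset_card _ hfin]
  -- maps-to for the classification
  have hmaps : ∀ P ∈ hfin.toFinset,
      cls n P ∈ (Finset.Icc 1 (n - 1)).disjSum (allLists (Finset.Icc 1 (n - 1))) := by
    intro P hP
    rw [Set.Finite.mem_toFinset] at hP
    obtain ⟨hop, hcard, hwt⟩ := hP
    have hnIcc : n ∈ Finset.Icc 1 n := by rw [Finset.mem_Icc]; omega
    have hex : ∃ b ∈ P, n ∈ b := (hop.2.2 n).2 hnIcc
    obtain ⟨hbP, hnb⟩ := blkOf_mem hex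
    set b := blkOf n P with hbdef
    have hbne : b ≠ [] := (hop.1 b hbP).1
    have hbnd : b.Nodup := (hop.1 b hbP).2
    have hbsub : ∀ x ∈ b, x ∈ Finset.Icc 1 n := hop.block_subset hbP
    by_cases hh : b.headI = n
    · rw [cls, ← hbdef, if_pos hh, Finset.inr_mem_disjSum, mem_allLists]
      have hcons : b.headI :: b.tail = b := cons_headI_tail' hbne
      have hnottail : n ∉ b.tail := by
        intro h
        have := hcons ▸ hbnd
        rw [List.nodup_cons] at this
        exact this.1 (hh ▸ h)
      refine ⟨List.Nodup.sublist (List.tail_sublist b) hbnd, fun x hx => ?_⟩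
      have hxb : x ∈ b := List.mem_of_mem_tail hx
      have hx1 := hbsub x hxb
      rw [Finset.mem_Icc] at hx1 ⊢
      have : x ≠ n := fun h => hnottail (h ▸ hx)
      omega
    · rw [cls, ← hbdef, if_neg hh, Finset.inl_mem_disjSum]
      obtain ⟨hpb, hpn, -⟩ := reconstruct hbnd hnb hh
      have := hbsub _ hpb
      rw [Finset.mem_Icc] at this ⊢
      omega
  have hIccCard : (Finset.Icc 1 (n - 1)).card = n - 1 := by rw [Nat.card_Icc]; omega
  rw [hncard, Finset.card_eq_sum_card_fiberwise hmaps, Finset.sum_disjSum]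
  congr 1
  · -- case A
    have hA : ∀ p ∈ Finset.Icc 1 (n - 1),
        (hfin.toFinset.filter (fun P => cls n P = Sum.inl p)).card
          = weightedLah ℓ (n - 1) m := by
      intro p hp
      have hcoe : ↑(hfin.toFinset.filter (fun P => cls n P = Sum.inl p))
          = {P | P ∈ WSet ℓ (Finset.Icc 1 n) m ∧ cls n P = Sum.inl p} := by
        ext P
        simp [Set.Finite.mem_toFinset]
      rw [← Set.ncard_coe_finset, hcoe, fiberA hn hp, WSet_ncard_eq_weightedLah, hIccCard]
    rw [Finset.sum_congr rfl hA, Finset.sum_const, hIccCard, smul_eq_mul]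
  · -- case B
    have hB : ∀ t ∈ allLists (Finset.Icc 1 (n - 1)),
        (hfin.toFinset.filter (fun P => cls n P = Sum.inr t)).card
          = weightedLah (ℓ - (t.length : ℤ)) (n - 1 - t.length) (m - 1) := by
      intro t ht
      obtain ⟨htnd, htsub⟩ := mem_allLists.1 ht
      have hcoe : ↑(hfin.toFinset.filter (fun P => cls n P = Sum.inr t))
          = {P | P ∈ WSet ℓ (Finset.Icc 1 n) m ∧ cls n P = Sum.inr t} := by
        ext P
        simp [Set.Finite.mem_toFinset]
      have hsubF : t.toFinset ⊆ Finset.Icc 1 (n - 1) :=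
        fun x hx => htsub x (List.mem_toFinset.1 hx)
      have hcards : (Finset.Icc 1 (n - 1) \ t.toFinset).card = n - 1 - t.length := by
        rw [Finset.card_sdiff_of_subset hsubF, hIccCard, List.toFinset_card_of_nodup htnd]
      rw [← Set.ncard_coe_finset, hcoe, fiberB hn hm ht, WSet_ncard_eq_weightedLah, hcards]
    rw [Finset.sum_congr rfl hB]
    have hmaps2 : ∀ t ∈ allLists (Finset.Icc 1 (n - 1)), t.length ∈ Finset.range n := by
      intro t ht
      obtain ⟨htnd, htsub⟩ := mem_allLists.1 ht
      have h1 : t.toFinset.card ≤ (Finset.Icc 1 (n - 1)).card :=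
        Finset.card_le_card (fun x hx => htsub x (List.mem_toFinset.1 hx))
      rw [List.toFinset_card_of_nodup htnd, Nat.card_Icc] at h1
      rw [Finset.mem_range]
      omega
    rw [← Finset.sum_fiberwise_of_maps_to hmaps2]
    apply Finset.sum_congr rfl
    intro j hj
    have : ∀ t ∈ (allLists (Finset.Icc 1 (n - 1))).filter (fun t => t.length = j),
        weightedLah (ℓ - (t.length : ℤ)) (n - 1 - t.length) (m - 1)
          = weightedLah (ℓ - (j : ℤ)) (n - 1 - j) (m - 1) := by
      intro t ht
      rw [(Finset.mem_filter.1 ht).2]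
    rw [Finset.sum_congr rfl this, Finset.sum_const, smul_eq_mul,
      card_allLists_filter_len, hIccCard]

end WLaux

theorem weightedLah_recurrence (ℓ : ℤ) (n m : ℕ) (hn : 1 ≤ n) (hm : 1 ≤ m) :
    weightedLah ℓ n m =
      (n - 1) * weightedLah ℓ (n - 1) m +
        ∑ j ∈ Finset.range n,
          (n - 1).choose j * j.factorial * weightedLah (ℓ - (j : ℤ)) (n - 1 - j) (m - 1) :=
  WLaux.main_recurrence ℓ n m hn hm
end
end

section
/- For all 2 ≤ m ≤ n and 0 ≤ ℓ ≤ n−m, one has W(ℓ,n,m) > (n−1)·W(ℓ,n−1,m). -/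
noncomputable section

open Finset

/-- insert `x` right after the first occurrence of `j` -/
def insAft (j x : ℕ) : List ℕ → List ℕ
  | [] => []
  | a :: l => if a = j then a :: x :: l else a :: insAft j x l

lemma insAft_perm {j x : ℕ} : ∀ {l : List ℕ}, j ∈ l → (insAft j x l).Perm (x :: l)
  | a :: l, h => by
    by_cases ha : a = j
    · simp only [insAft, if_pos ha]
      exact List.Perm.swap x a l
    · have hjl : j ∈ l := by
        rcases List.mem_cons.mp h with h' | h'
        · exact absurd h'.symm ha
        · exact h'
      simp only [insAft, if_neg ha]
      exact ((insAft_perm hjl).cons a).trans (List.Perm.swap x a l)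

lemma insAft_of_not_mem {j x : ℕ} : ∀ {l : List ℕ}, j ∉ l → insAft j x l = l
  | [], _ => rfl
  | a :: l, h => by
    have ha : ¬ a = j := fun e => h (e ▸ (List.mem_cons_self : a ∈ a :: l))
    simp only [insAft, if_neg ha]
    rw [insAft_of_not_mem (fun hl => h (List.mem_cons_of_mem a hl))]

lemma insAft_headI {j x : ℕ} {l : List ℕ} (h : l ≠ []) :
    (insAft j x l).headI = l.headI := by
  cases l with
  | nil => simp at h
  | cons a l => by_cases ha : a = j <;> simp [insAft, ha]

lemma insAft_ne_nil {j x : ℕ} {l : List ℕ} (h : l ≠ []) : insAft j x l ≠ [] := by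
  cases l with
  | nil => simp at h
  | cons a l => by_cases ha : a = j <;> simp [insAft, ha]

lemma mem_insAft {j x y : ℕ} {l : List ℕ} (hj : j ∈ l) :
    y ∈ insAft j x l ↔ y = x ∨ y ∈ l := by
  rw [(insAft_perm hj).mem_iff, List.mem_cons]

lemma insAft_nodup {j x : ℕ} {l : List ℕ} (hj : j ∈ l) (hx : x ∉ l) (hl : l.Nodup) :
    (insAft j x l).Nodup := by
  rw [(insAft_perm hj).nodup_iff]
  exact List.nodup_cons.mpr ⟨hx, hl⟩

lemma erase_insAft {j x : ℕ} : ∀ {l : List ℕ}, x ∉ l → (insAft j x l).erase x = l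
  | [], _ => rfl
  | a :: l, h => by
    have hax : a ≠ x := fun e => h (e ▸ (List.mem_cons_self : a ∈ a :: l))
    have hxl : x ∉ l := fun hl => h (List.mem_cons_of_mem a hl)
    by_cases ha : a = j
    · simp [insAft, if_pos ha, List.erase_cons, hax]
    · simp only [insAft, if_neg ha]
      rw [List.erase_cons_tail, erase_insAft hxl]
      simp [hax]

def prevE (x : ℕ) : List ℕ → ℕ
  | a :: b :: l => if b = x then a else prevE x (b :: l)
  | _ => 0

lemma prevE_insAft {j x : ℕ} : ∀ {l : List ℕ}, j ∈ l → x ∉ l →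
    prevE x (insAft j x l) = j
  | a :: l, hj, hx => by
    by_cases ha : a = j
    · simp [insAft, if_pos ha, prevE, ha]
    · have hjl : j ∈ l := by
        rcases List.mem_cons.mp hj with h' | h'
        · exact absurd h'.symm ha
        · exact h'
      have hxl : x ∉ l := fun hl => hx (List.mem_cons_of_mem a hl)
      simp only [insAft, if_neg ha]
      cases l with
      | nil => simp at hjl
      | cons b t =>
        have hbx : ¬ b = x := by
          intro e; exact hxl (e ▸ (List.mem_cons_self : b ∈ b :: t))
        by_cases hb : b = j
        · rw [show insAft j x (b :: t) = b :: x :: t by simp [insAft, if_pos hb]]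
          rw [show prevE x (a :: b :: x :: t) = prevE x (b :: x :: t) by
            simp [prevE, hbx]]
          simp [prevE, hb]
        · simp only [insAft, if_neg hb]
          rw [show (a :: b :: insAft j x t) = a :: (b :: insAft j x t) from rfl]
          have := prevE_insAft (l := b :: t) hjl hxl
          simp only [insAft, if_neg hb] at this
          simpa [prevE, hbx] using this

lemma blockWeight_insAft {j x : ℕ} {l : List ℕ} (hj : j ∈ l) (hx : ¬ x < l.headI) :
    blockWeight (insAft j x l) = blockWeight l := by
  have hne : l ≠ [] := List.ne_nil_of_mem hj
  unfold blockWeight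
  rw [insAft_headI hne, ((insAft_perm hj).filter _).length_eq]
  simp [List.filter_cons, hx]



def insB (n j : ℕ) (b : List ℕ) : List ℕ := if j ∈ b then insAft j n b else b

lemma erase_insB {n j : ℕ} {b : List ℕ} (hn : n ∉ b) : (insB n j b).erase n = b := by
  unfold insB
  split
  · exact erase_insAft hn
  · exact List.erase_of_not_mem hn

lemma mem_insB {n j x : ℕ} {b : List ℕ} : x ∈ insB n j b ↔ x ∈ b ∨ (x = n ∧ j ∈ b) := by
  unfold insB
  split <;> rename_i h
  · rw [mem_insAft h]; tauto
  · tauto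

section Main

variable {N j : ℕ} {P : Finset (List ℕ)}

lemma part_mem (hP : IsOrderedPartition N P) : ∀ b ∈ P, ∀ x ∈ b, 1 ≤ x ∧ x ≤ N := by
  intro b hb x hx
  have := (hP.2.2 x).mp ⟨b, hb, hx⟩
  simpa [Finset.mem_Icc] using this

lemma part_not_mem (hP : IsOrderedPartition N P) : ∀ b ∈ P, (N + 1) ∉ b := by
  intro b hb h
  have := (part_mem hP b hb _ h).2
  omega

lemma insB_injOn (hP : IsOrderedPartition N P) :
    Set.InjOn (insB (N + 1) j) P := by
  intro b hb b' hb' he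
  rw [← erase_insB (part_not_mem hP b hb), ← erase_insB (part_not_mem hP b' hb'), he]

lemma F_isPartition (hP : IsOrderedPartition N P) (hj1 : 1 ≤ j) (hjN : j ≤ N) :
    IsOrderedPartition (N + 1) (P.image (insB (N + 1) j)) := by
  obtain ⟨hne, hdisj, hcov⟩ := hP
  have hP' : IsOrderedPartition N P := ⟨hne, hdisj, hcov⟩
  refine ⟨?_, ?_, ?_⟩
  · intro c hc
    obtain ⟨b, hb, rfl⟩ := Finset.mem_image.mp hc
    unfold insB
    split <;> rename_i h
    · exact ⟨insAft_ne_nil (hne b hb).1,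
        insAft_nodup h (part_not_mem hP' b hb) (hne b hb).2⟩
    · exact hne b hb
  · intro c₁ hc₁ c₂ hc₂ hcne x hx₁ hx₂
    obtain ⟨b₁, hb₁, rfl⟩ := Finset.mem_image.mp hc₁
    obtain ⟨b₂, hb₂, rfl⟩ := Finset.mem_image.mp hc₂
    have hbne : b₁ ≠ b₂ := fun e => hcne (by rw [e])
    rcases mem_insB.mp hx₁ with h₁ | ⟨rfl, hj₁⟩
    · rcases mem_insB.mp hx₂ with h₂ | ⟨rfl, hj₂⟩
      · exact hdisj b₁ hb₁ b₂ hb₂ hbne x h₁ h₂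
      · exact part_not_mem hP' b₁ hb₁ h₁
    · rcases mem_insB.mp hx₂ with h₂ | ⟨_, hj₂⟩
      · exact part_not_mem hP' b₂ hb₂ h₂
      · exact hdisj b₁ hb₁ b₂ hb₂ hbne j hj₁ hj₂
  · intro x
    constructor
    · rintro ⟨c, hc, hx⟩
      obtain ⟨b, hb, rfl⟩ := Finset.mem_image.mp hc
      rcases mem_insB.mp hx with h | ⟨rfl, _⟩
      · have := part_mem hP' b hb x h
        simp [Finset.mem_Icc]; omega
      · simp [Finset.mem_Icc]
    · intro hx
      rw [Finset.mem_Icc] at hx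
      by_cases hxN : x ≤ N
      · obtain ⟨b, hb, hxb⟩ := (hcov x).mpr (Finset.mem_Icc.mpr ⟨hx.1, hxN⟩)
        exact ⟨insB (N+1) j b, Finset.mem_image_of_mem _ hb, mem_insB.mpr (Or.inl hxb)⟩
      · have hxe : x = N + 1 := by omega
        obtain ⟨b, hb, hjb⟩ := (hcov j).mpr (Finset.mem_Icc.mpr ⟨hj1, hjN⟩)
        exact ⟨insB (N+1) j b, Finset.mem_image_of_mem _ hb,
          mem_insB.mpr (Or.inr ⟨hxe, hjb⟩)⟩

lemma F_card (hP : IsOrderedPartition N P) :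
    (P.image (insB (N + 1) j)).card = P.card :=
  Finset.card_image_of_injOn (insB_injOn hP)

lemma headI_mem {l : List ℕ} (h : l ≠ []) : l.headI ∈ l := by
  cases l with
  | nil => simp at h
  | cons a t => simp

lemma F_weight (hP : IsOrderedPartition N P) :
    partitionWeight (P.image (insB (N + 1) j)) = partitionWeight P := by
  unfold partitionWeight
  rw [Finset.sum_image (fun b hb b' hb' he => insB_injOn hP hb hb' he)]
  refine Finset.sum_congr rfl fun b hb => ?_
  unfold insB
  split <;> rename_i h
  · refine blockWeight_insAft h ?_
    have := (part_mem hP b hb _ (headI_mem (hP.1 b hb).1)).2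
    omega
  · rfl

lemma F_recover_P (hP : IsOrderedPartition N P) :
    (P.image (insB (N + 1) j)).image (fun b => b.erase (N + 1)) = P := by
  rw [Finset.image_image]
  calc P.image (fun b => (insB (N+1) j b).erase (N+1)) = P.image id :=
        Finset.image_congr (fun b hb => erase_insB (part_not_mem hP b hb))
    _ = P := Finset.image_id

lemma F_recover_j (hP : IsOrderedPartition N P) :
    ∀ c ∈ P.image (insB (N + 1) j), (N + 1) ∈ c → prevE (N + 1) c = j := by
  intro c hc hNc
  obtain ⟨b, hb, rfl⟩ := Finset.mem_image.mp hc
  unfold insB at hNc ⊢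
  split <;> rename_i h
  · exact prevE_insAft h (part_not_mem hP b hb)
  · rw [if_neg h] at hNc
    exact absurd hNc (part_not_mem hP b hb)

lemma singleton_n_not_mem_F (hP : IsOrderedPartition N P) :
    [N + 1] ∉ P.image (insB (N + 1) j) := by
  intro hc
  obtain ⟨b, hb, he⟩ := Finset.mem_image.mp hc
  unfold insB at he
  split at he <;> rename_i h
  · have hlen := (insAft_perm (x := N+1) h).length_eq
    rw [he] at hlen
    have hb0 : b = [] := by
      have : b.length = 0 := by simpa using hlen.symm
      exact List.length_eq_zero_iff.mp this
    exact (hP.1 b hb).1 hb0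
  · exact part_not_mem hP b hb (by rw [he]; simp)

end Main



lemma finite_lists (N : ℕ) : {l : List ℕ | l.length ≤ N ∧ ∀ x ∈ l, x ≤ N}.Finite := by
  set fc : ℕ → Fin (N + 1) := fun x => Fin.ofNat (N + 1) x with hfc
  have key : ∀ l : List ℕ, (∀ x ∈ l, x ≤ N) → List.map Fin.val (List.map fc l) = l := by
    intro l hl
    induction l with
    | nil => rfl
    | cons a t ih =>
      simp only [List.map_cons, List.cons.injEq]
      refine ⟨?_, ih fun x hx => hl x (List.mem_cons_of_mem a hx)⟩
      have haN : a ≤ N := hl a (List.mem_cons_self : a ∈ a :: t)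
      show (Fin.ofNat (N + 1) a).val = a
      simp [Fin.ofNat, Nat.mod_eq_of_lt (Nat.lt_succ_of_le haN)]
  have h : Set.InjOn (fun l : List ℕ => l.map fc)
      {l : List ℕ | l.length ≤ N ∧ ∀ x ∈ l, x ≤ N} := by
    intro l₁ h₁ l₂ h₂ he
    rw [← key l₁ h₁.2, ← key l₂ h₂.2]
    simp only at he
    rw [he]
  have hfin : {l' : List (Fin (N + 1)) | l'.length ≤ N}.Finite :=
    List.finite_length_le (Fin (N + 1)) N
  have himg : (fun l : List ℕ => l.map fc) ''
      {l : List ℕ | l.length ≤ N ∧ ∀ x ∈ l, x ≤ N} ⊆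
      {l' : List (Fin (N + 1)) | l'.length ≤ N} := by
    rintro _ ⟨l, hl, rfl⟩
    simpa using hl.1
  exact Set.Finite.of_finite_image (hfin.subset himg) h

lemma partitions_finite (N m : ℕ) (ℓ : ℤ) :
    {P : Finset (List ℕ) | IsOrderedPartition N P ∧ P.card = m ∧
      (partitionWeight P : ℤ) = ℓ}.Finite := by
  set S := {l : List ℕ | l.length ≤ N ∧ ∀ x ∈ l, x ≤ N} with hS
  have h1 : {P : Finset (List ℕ) | ↑P ⊆ S}.Finite := by
    have : {P : Finset (List ℕ) | ↑P ⊆ S} =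
        (fun P : Finset (List ℕ) => (↑P : Set (List ℕ))) ⁻¹' {t | t ⊆ S} := rfl
    rw [this]
    exact Set.Finite.preimage (Finset.coe_injective.injOn)
      (finite_lists N).finite_subsets
  refine h1.subset ?_
  rintro P ⟨⟨hne, _, hcov⟩, _, _⟩
  intro b hb
  simp only [Finset.mem_coe] at hb
  have hmem : ∀ x ∈ b, 1 ≤ x ∧ x ≤ N := by
    intro x hx
    have := (hcov x).mp ⟨b, hb, hx⟩
    simpa [Finset.mem_Icc] using this
  constructor
  · have hsub : b.toFinset ⊆ Finset.Icc 1 N := by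
      intro x hx
      rw [List.mem_toFinset] at hx
      exact Finset.mem_Icc.mpr (hmem x hx)
    have := Finset.card_le_card hsub
    rw [List.toFinset_card_of_nodup (hne b hb).2, Nat.card_Icc] at this
    omega
  · exact fun x hx => (hmem x hx).2

/-! ### the special partition -/

lemma range_filter_lt_length (a ℓ : ℕ) (h : ℓ ≤ a) :
    ((List.range a).filter (fun x => decide (x < ℓ))).length = ℓ := by
  rw [show a = ℓ + (a - ℓ) by omega, List.range_add, List.filter_append]
  rw [List.filter_eq_self.mpr (fun x hx => by
      simp only [List.mem_range] at hx; simpa using hx)]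
  rw [List.filter_eq_nil_iff.mpr (fun x hx => by
      simp only [List.mem_map, List.mem_range] at hx
      obtain ⟨y, _, rfl⟩ := hx
      simp)]
  simp

lemma special_partition (n m ℓ : ℕ) (hm : 2 ≤ m) (hmn : m ≤ n) (hℓ : ℓ ≤ n - m) :
    ∃ Q : Finset (List ℕ), IsOrderedPartition n Q ∧ Q.card = m ∧
      partitionWeight Q = ℓ ∧ [n] ∈ Q := by
  classical
  set a := n - m + 1 with ha
  have hℓa : ℓ + 1 ≤ a := by omega
  set B₀ : List ℕ := (ℓ+1) :: (((List.range a).map (· + 1)).filter (fun x => x ≠ ℓ+1))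
    with hB₀
  have memB₀ : ∀ x : ℕ, x ∈ B₀ ↔ 1 ≤ x ∧ x ≤ a := by
    intro x
    simp only [hB₀, List.mem_cons, List.mem_filter, List.mem_map, List.mem_range,
      decide_eq_true_eq]
    constructor
    · rintro (rfl | ⟨⟨y, hy, rfl⟩, _⟩) <;> omega
    · intro hx
      by_cases he : x = ℓ + 1
      · exact Or.inl he
      · exact Or.inr ⟨⟨x - 1, by omega, by omega⟩, he⟩
  have nodupB₀ : B₀.Nodup := by
    rw [hB₀, List.nodup_cons]
    constructor
    · intro hmem
      rw [List.mem_filter] at hmem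
      simp at hmem
    · exact List.Nodup.filter _ ((List.nodup_range : (List.range a).Nodup).map (fun x y => by omega))
  have hBne : B₀ ≠ [] := by simp [hB₀]
  have headB₀ : B₀.headI = ℓ + 1 := by simp [hB₀]
  have weightB₀ : blockWeight B₀ = ℓ := by
    unfold blockWeight
    rw [headB₀, hB₀]
    rw [List.filter_cons]
    have h0 : decide (ℓ + 1 < ℓ + 1) = false := by simp
    rw [h0]
    simp only [Bool.false_eq_true, if_false]
    rw [List.filter_filter, List.filter_map, List.length_map]
    rw [List.filter_congr (l := List.range a)
      (q := fun x => decide (x < ℓ)) (fun x _ => by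
        simp only [Function.comp_apply]
        rw [Bool.eq_iff_iff]
        simp only [Bool.and_eq_true, decide_eq_true_eq]
        omega)]
    exact range_filter_lt_length a ℓ (by omega)
  set Q : Finset (List ℕ) :=
    insert B₀ ((Finset.Icc (a + 1) n).image (fun x => [x])) with hQ
  have hsing : ∀ c ∈ (Finset.Icc (a + 1) n).image (fun x : ℕ => [x]),
      ∃ x, a + 1 ≤ x ∧ x ≤ n ∧ c = [x] := by
    intro c hc
    obtain ⟨x, hx, rfl⟩ := Finset.mem_image.mp hc
    rw [Finset.mem_Icc] at hx
    exact ⟨x, hx.1, hx.2, rfl⟩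
  have hBnot : B₀ ∉ (Finset.Icc (a + 1) n).image (fun x : ℕ => [x]) := by
    intro hc
    obtain ⟨x, hx1, _, he⟩ := hsing B₀ hc
    have : x ∈ B₀ := by rw [he]; simp
    rw [memB₀ x] at this
    omega
  have memQ : ∀ c, c ∈ Q ↔ c = B₀ ∨ ∃ x, a + 1 ≤ x ∧ x ≤ n ∧ c = [x] := by
    intro c
    rw [hQ, Finset.mem_insert]
    constructor
    · rintro (rfl | hc)
      · exact Or.inl rfl
      · exact Or.inr (hsing c hc)
    · rintro (rfl | ⟨x, h1, h2, rfl⟩)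
      · exact Or.inl rfl
      · exact Or.inr (Finset.mem_image.mpr ⟨x, Finset.mem_Icc.mpr ⟨h1, h2⟩, rfl⟩)
  refine ⟨Q, ⟨?_, ?_, ?_⟩, ?_, ?_, ?_⟩
  · -- nonempty, nodup
    intro b hb
    rcases (memQ b).mp hb with rfl | ⟨x, _, _, rfl⟩
    · exact ⟨hBne, nodupB₀⟩
    · simp
  · -- disjoint
    intro b₁ hb₁ b₂ hb₂ hne x hx₁ hx₂
    rcases (memQ b₁).mp hb₁ with rfl | ⟨y₁, hy₁, _, rfl⟩ <;>
      rcases (memQ b₂).mp hb₂ with rfl | ⟨y₂, hy₂, _, rfl⟩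
    · exact hne rfl
    · have h1 := (memB₀ x).mp hx₁
      have h2 : x = y₂ := by simpa using hx₂
      omega
    · have h1 := (memB₀ x).mp hx₂
      have h2 : x = y₁ := by simpa using hx₁
      omega
    · have h1 : x = y₁ := by simpa using hx₁
      have h2 : x = y₂ := by simpa using hx₂
      exact hne (by rw [h1] at h2; rw [h2])
  · -- cover
    intro x
    rw [Finset.mem_Icc]
    constructor
    · rintro ⟨b, hb, hxb⟩
      rcases (memQ b).mp hb with rfl | ⟨y, hy1, hy2, rfl⟩
      · have := (memB₀ x).mp hxb
        omega
      · have : x = y := by simpa using hxb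
        omega
    · intro hx
      by_cases hxa : x ≤ a
      · exact ⟨B₀, (memQ B₀).mpr (Or.inl rfl), (memB₀ x).mpr ⟨hx.1, hxa⟩⟩
      · exact ⟨[x], (memQ [x]).mpr (Or.inr ⟨x, by omega, hx.2, rfl⟩), by simp⟩
  · -- card
    rw [hQ, Finset.card_insert_of_notMem hBnot,
      Finset.card_image_of_injective _ (fun x y h => by simpa using h),
      Nat.card_Icc]
    omega
  · -- weight
    rw [hQ]
    unfold partitionWeight
    rw [Finset.sum_insert hBnot, weightB₀,
      Finset.sum_image (fun x _ y _ h => by simpa using h)]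
    have : ∀ x ∈ Finset.Icc (a+1) n, blockWeight [x] = 0 := by
      intro x _
      unfold blockWeight
      simp
    rw [Finset.sum_congr rfl this]
    simp
  · -- [n] ∈ Q
    exact (memQ [n]).mpr (Or.inr ⟨n, by omega, le_refl n, rfl⟩)


theorem weightedLah_gt (n m ℓ : ℕ) (hm : 2 ≤ m) (hmn : m ≤ n) (hℓ : ℓ ≤ n - m) :
    (n - 1) * weightedLah (ℓ : ℤ) (n - 1) m < weightedLah (ℓ : ℤ) n m := by
  classical
  obtain ⟨N, rfl⟩ : ∃ N, n = N + 1 := ⟨n - 1, by omega⟩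
  simp only [Nat.add_sub_cancel]
  have hA : {P : Finset (List ℕ) | IsOrderedPartition N P ∧ P.card = m ∧
      (partitionWeight P : ℤ) = (ℓ : ℤ)}.Finite := partitions_finite N m ℓ
  have hB : {P : Finset (List ℕ) | IsOrderedPartition (N + 1) P ∧ P.card = m ∧
      (partitionWeight P : ℤ) = (ℓ : ℤ)}.Finite := partitions_finite (N + 1) m ℓ
  have eA : weightedLah (ℓ : ℤ) N m = hA.toFinset.card :=
    Set.ncard_eq_toFinset_card _ hA
  have eB : weightedLah (ℓ : ℤ) (N + 1) m = hB.toFinset.card :=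
    Set.ncard_eq_toFinset_card _ hB
  rw [eA, eB]
  -- the special partition
  obtain ⟨Q₀, hQ₀part, hQ₀card, hQ₀w, hQ₀n⟩ :=
    special_partition (N + 1) m ℓ hm hmn hℓ
  have hQ₀B : Q₀ ∈ hB.toFinset := by
    rw [Set.Finite.mem_toFinset]
    exact ⟨hQ₀part, hQ₀card, by exact_mod_cast congrArg (Nat.cast : ℕ → ℤ) hQ₀w⟩
  -- the injection
  set Φ : ℕ × Finset (List ℕ) → Finset (List ℕ) :=
    fun p => p.2.image (insB (N + 1) p.1) with hΦ
  set T : Finset (ℕ × Finset (List ℕ)) := (Finset.Icc 1 N) ×ˢ hA.toFinset with hT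
  have hmemT : ∀ p ∈ T, 1 ≤ p.1 ∧ p.1 ≤ N ∧ IsOrderedPartition N p.2 ∧
      p.2.card = m ∧ (partitionWeight p.2 : ℤ) = (ℓ : ℤ) := by
    intro p hp
    rw [hT, Finset.mem_product, Finset.mem_Icc, Set.Finite.mem_toFinset] at hp
    exact ⟨hp.1.1, hp.1.2, hp.2.1, hp.2.2.1, hp.2.2.2⟩
  have himg : ∀ p ∈ T, Φ p ∈ hB.toFinset.erase Q₀ := by
    intro p hp
    obtain ⟨hj1, hjN, hP, hcard, hw⟩ := hmemT p hp
    refine Finset.mem_erase.mpr ⟨?_, ?_⟩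
    · intro he
      apply singleton_n_not_mem_F (j := p.1) hP
      show [N + 1] ∈ Φ p
      rw [show Φ p = Q₀ from he]
      exact hQ₀n
    · rw [Set.Finite.mem_toFinset]
      refine ⟨F_isPartition hP hj1 hjN, (F_card hP).trans hcard, ?_⟩
      rw [F_weight hP]
      exact hw
  have hinj : Set.InjOn Φ ↑T := by
    intro p hp q hq he
    have hp' := hmemT p (by exact_mod_cast hp)
    have hq' := hmemT q (by exact_mod_cast hq)
    obtain ⟨hpj1, hpjN, hPp, _, _⟩ := hp'
    obtain ⟨hqj1, hqjN, hPq, _, _⟩ := hq'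
    have hcov := (F_isPartition (j := p.1) hPp hpj1 hpjN).2.2
    obtain ⟨c, hc, hNc⟩ := (hcov (N + 1)).mpr (Finset.mem_Icc.mpr ⟨by omega, le_refl _⟩)
    have e1 : prevE (N + 1) c = p.1 := F_recover_j hPp c hc hNc
    have e2 : prevE (N + 1) c = q.1 := by
      refine F_recover_j hPq c ?_ hNc
      rw [show q.2.image (insB (N+1) q.1) = Φ q from rfl, ← he]
      exact hc
    have e3 : p.2 = q.2 := by
      rw [← F_recover_P (j := p.1) hPp, ← F_recover_P (j := q.1) hPq]
      rw [show p.2.image (insB (N+1) p.1) = Φ p from rfl,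
        show q.2.image (insB (N+1) q.1) = Φ q from rfl, he]
    exact Prod.ext (e1 ▸ e2) e3
  calc N * hA.toFinset.card = T.card := by
        rw [hT, Finset.card_product, Nat.card_Icc]
        congr 1
    _ = (T.image Φ).card := (Finset.card_image_of_injOn hinj).symm
    _ ≤ (hB.toFinset.erase Q₀).card :=
        Finset.card_le_card (Finset.image_subset_iff.mpr himg)
    _ < hB.toFinset.card := Finset.card_erase_lt_of_mem hQ₀B
end
end

section
/- For 2 ≤ m ≤ n and 0 ≤ ℓ ≤ n−m, the weighted Lah number W(0, n−1−ℓ, m−1) equals the unsigned Stirling number of the first kind with parameters n−1−ℓ and m−1, and in particular is positive. -/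
noncomputable section

open Finset

set_option linter.unusedSectionVars false

namespace WLaux
open Equiv Equiv.Perm

variable {N : ℕ} [NeZero N]

def val1 (x : Fin N) : ℕ := (x : ℕ) + 1

def toFin (N : ℕ) [NeZero N] (x : ℕ) : Fin N :=
  if h : x - 1 < N then ⟨x - 1, h⟩ else ⟨0, Nat.pos_of_ne_zero (NeZero.ne N)⟩

lemma val1_injective : Function.Injective (val1 (N := N)) := by
  intro x y h; simpa [val1, Fin.ext_iff] using h

lemma toFin_val1 (x : Fin N) : toFin N (val1 x) = x := by
  simp [toFin, val1, Fin.ext_iff]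

lemma val1_mem_Icc (x : Fin N) : val1 x ∈ Finset.Icc 1 N := by
  simp only [val1, Finset.mem_Icc]; omega

lemma val1_toFin {x : ℕ} (hx : x ∈ Finset.Icc 1 N) : val1 (toFin N x) = x := by
  simp only [Finset.mem_Icc] at hx
  have h : x - 1 < N := by omega
  simp [toFin, val1, h]; omega

lemma toFin_le_toFin {x y : ℕ} (hx : x ∈ Finset.Icc 1 N) (hy : y ∈ Finset.Icc 1 N)
    (hxy : x ≤ y) : toFin N x ≤ toFin N y := by
  simp only [Finset.mem_Icc] at hx hy
  have h1 : x - 1 < N := by omega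
  have h2 : y - 1 < N := by omega
  simp [toFin, h1, h2, Fin.le_def]; omega

def FB (N : ℕ) [NeZero N] (b : List ℕ) : Equiv.Perm (Fin N) := (b.map (toFin N)).formPerm

def bOC (c : Equiv.Perm (Fin N)) : List ℕ :=
  if h : c.support.Nonempty then (c.toList (c.support.min' h)).map val1 else []

def blocksOf (σ : Equiv.Perm (Fin N)) : Finset (List ℕ) :=
  σ.cycleFactorsFinset.image bOC ∪ σ.supportᶜ.image (fun x => [val1 x])

def Good (N : ℕ) (P : Finset (List ℕ)) : Prop :=
  IsOrderedPartition N P ∧ partitionWeight P = 0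

section GoodLemmas

variable {P : Finset (List ℕ)} (hP : Good N P) {b b₁ b₂ : List ℕ}
include hP

lemma Good.ne_nil (hb : b ∈ P) : b ≠ [] := (hP.1.1 b hb).1

lemma Good.nodup (hb : b ∈ P) : b.Nodup := (hP.1.1 b hb).2

lemma Good.mem_Icc (hb : b ∈ P) {x : ℕ} (hx : x ∈ b) : x ∈ Finset.Icc 1 N :=
  (hP.1.2.2 x).mp ⟨b, hb, hx⟩

lemma Good.eq_of_mem_mem (hb₁ : b₁ ∈ P) (hb₂ : b₂ ∈ P) {x : ℕ}
    (hx₁ : x ∈ b₁) (hx₂ : x ∈ b₂) : b₁ = b₂ := by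
  by_contra h
  exact hP.1.2.1 b₁ hb₁ b₂ hb₂ h x hx₁ hx₂

lemma Good.blockWeight_eq_zero (hb : b ∈ P) : blockWeight b = 0 :=
  (Finset.sum_eq_zero_iff.mp hP.2) b hb

lemma Good.headI_le (hb : b ∈ P) {x : ℕ} (hx : x ∈ b) : b.headI ≤ x := by
  have h := hP.blockWeight_eq_zero hb
  rw [blockWeight, List.length_eq_zero_iff] at h
  have := List.filter_eq_nil_iff.mp h x hx
  simpa using this

lemma Good.map_toFin_map_val1 (hb : b ∈ P) : (b.map (toFin N)).map val1 = b := by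
  rw [List.map_map]
  conv_rhs => rw [← List.map_id b]
  exact List.map_congr_left fun x hx => val1_toFin (hP.mem_Icc hb hx)

lemma Good.nodup_map_toFin (hb : b ∈ P) : (b.map (toFin N)).Nodup := by
  have := hP.nodup hb
  refine List.Nodup.map_on ?_ this
  intro x hx y hy hxy
  have := congrArg val1 hxy
  rwa [val1_toFin (hP.mem_Icc hb hx), val1_toFin (hP.mem_Icc hb hy)] at this

lemma Good.mem_map_toFin (hb : b ∈ P) {x : Fin N} :
    x ∈ b.map (toFin N) ↔ val1 x ∈ b := by
  constructor
  · rintro hx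
    obtain ⟨y, hy, rfl⟩ := List.mem_map.mp hx
    rwa [val1_toFin (hP.mem_Icc hb hy)]
  · intro hx
    exact List.mem_map.mpr ⟨val1 x, hx, toFin_val1 x⟩

lemma Good.headI_mem (hb : b ∈ P) : b.headI ∈ b := by
  cases b with
  | nil => exact absurd rfl (hP.ne_nil hb)
  | cons h t => exact List.mem_cons_self


section Big
variable (hb : b ∈ P) (hb2 : 2 ≤ b.length)
include hb hb2

lemma Good.ne_singleton_map : ∀ x : Fin N, b.map (toFin N) ≠ [x] := by
  intro x h
  have := congrArg List.length h
  simp at this; omega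

lemma Good.isCycle_FB : (FB N b).IsCycle :=
  List.isCycle_formPerm (hP.nodup_map_toFin hb) (by simpa using hb2)

lemma Good.support_FB : (FB N b).support = (b.map (toFin N)).toFinset :=
  List.support_formPerm_of_nodup _ (hP.nodup_map_toFin hb) (hP.ne_singleton_map hb hb2)

lemma Good.mem_support_FB {x : Fin N} : x ∈ (FB N b).support ↔ val1 x ∈ b := by
  rw [hP.support_FB hb hb2, List.mem_toFinset, hP.mem_map_toFin hb]

lemma Good.support_FB_nonempty : (FB N b).support.Nonempty :=
  ⟨toFin N b.headI, by rw [hP.mem_support_FB hb hb2, val1_toFin (hP.mem_Icc hb (hP.headI_mem hb))]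
                       exact hP.headI_mem hb⟩

lemma Good.min'_support_FB :
    (FB N b).support.min' (hP.support_FB_nonempty hb hb2) = toFin N b.headI := by
  apply le_antisymm
  · apply Finset.min'_le
    rw [hP.mem_support_FB hb hb2, val1_toFin (hP.mem_Icc hb (hP.headI_mem hb))]
    exact hP.headI_mem hb
  · apply Finset.le_min'
    intro y hy
    rw [hP.mem_support_FB hb hb2] at hy
    have h1 := hP.headI_le hb hy
    have := toFin_le_toFin (hP.mem_Icc hb (hP.headI_mem hb)) (hP.mem_Icc hb hy) h1
    rwa [toFin_val1] at this

lemma Good.toList_FB : (FB N b).toList (toFin N b.headI) = b.map (toFin N) := by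
  have h0 : 0 < (b.map (toFin N)).length := by simp; omega
  have hget : (b.map (toFin N)).get ⟨0, h0⟩ = toFin N b.headI := by
    cases b with
    | nil => simp at h0
    | cons h t => simp
  have := Equiv.Perm.toList_formPerm_nontrivial (b.map (toFin N)) (by simpa using hb2)
    (hP.nodup_map_toFin hb)
  rwa [hget] at this

lemma Good.bOC_FB : bOC (FB N b) = b := by
  rw [bOC, dif_pos (hP.support_FB_nonempty hb hb2), hP.min'_support_FB hb hb2,
    hP.toList_FB hb hb2, hP.map_toFin_map_val1 hb]

end Big

lemma Good.length_eq_one (hb : b ∈ P) (hb2 : ¬ 2 ≤ b.length) : b.length = 1 := by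
  have := hP.ne_nil hb
  rw [← List.length_pos_iff] at this
  omega

lemma Good.FB_eq_one (hb : b ∈ P) (hb2 : ¬ 2 ≤ b.length) : FB N b = 1 := by
  obtain ⟨x, rfl⟩ := List.length_eq_one_iff.mp (hP.length_eq_one hb hb2)
  simp [FB]

lemma Good.FB_commute (hb₁ : b₁ ∈ P) (hb₂ : b₂ ∈ P) (hne : b₁ ≠ b₂) :
    Commute (FB N b₁) (FB N b₂) := by
  by_cases h1 : 2 ≤ b₁.length
  · by_cases h2 : 2 ≤ b₂.length
    · refine Equiv.Perm.Disjoint.commute ?_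
      show ((b₁.map (toFin N)).formPerm).Disjoint ((b₂.map (toFin N)).formPerm)
      rw [List.formPerm_disjoint_iff (hP.nodup_map_toFin hb₁) (hP.nodup_map_toFin hb₂)
        (by simpa using h1) (by simpa using h2)]
      intro x hx₁ hx₂
      rw [hP.mem_map_toFin hb₁] at hx₁
      rw [hP.mem_map_toFin hb₂] at hx₂
      exact hne (hP.eq_of_mem_mem hb₁ hb₂ hx₁ hx₂)
    · rw [hP.FB_eq_one hb₂ h2]; exact Commute.one_right _
  · rw [hP.FB_eq_one hb₁ h1]; exact Commute.one_left _

lemma Good.pairwise_commute : (P : Set (List ℕ)).Pairwise (Function.onFun Commute (FB N)) :=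
  fun b₁ hb₁ b₂ hb₂ hne => hP.FB_commute hb₁ hb₂ hne

end GoodLemmas

def toPerm (P : Finset (List ℕ)) (hc : (P : Set (List ℕ)).Pairwise (Function.onFun Commute (FB N))) :
    Equiv.Perm (Fin N) :=
  P.noncommProd (FB N) hc

theorem noncommProd_image' {α β M : Type*} [Monoid M] [DecidableEq β]
    (s : Finset α) (g : α → β) (f : β → M) (hinj : Set.InjOn g s) (comm) (comm2) :
    (s.image g).noncommProd f comm = s.noncommProd (f ∘ g) comm2 := by
  have h : ((s.image g).val.map f) = s.val.map (f ∘ g) := by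
    rw [Finset.image_val, Multiset.dedup_eq_self.mpr, ← Multiset.map_map]
    exact Multiset.Nodup.map_on (fun x hx y hy hxy => hinj hx hy hxy) s.nodup
  have key : ∀ (m₁ m₂ : Multiset M) (hm : m₁ = m₂) c1 c2,
      Multiset.noncommProd m₁ c1 = Multiset.noncommProd m₂ c2 := by
    intro m₁ m₂ hm c1 c2; subst hm; rfl
  unfold Finset.noncommProd
  exact key _ _ h _ _

section Split

variable {P : Finset (List ℕ)} (hP : Good N P)
include hP

lemma Good.subset_coe : {x | x ∈ P ∧ 2 ≤ x.length} ⊆ (P : Set (List ℕ)) :=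
  fun _ hx => hx.1

lemma Good.toPerm_eq_big :
    toPerm P hP.pairwise_commute =
      (P.filter (fun b => 2 ≤ b.length)).noncommProd (FB N)
        (hP.pairwise_commute.mono (by simpa [Finset.coe_filter] using hP.subset_coe)) := by
  unfold toPerm
  have hsplit : P = P.filter (fun b => 2 ≤ b.length) ∪ P.filter (fun b => ¬ 2 ≤ b.length) :=
    (Finset.filter_union_filter_not_eq _ P).symm
  have hones : ∀ x ∈ P.filter (fun b => ¬ 2 ≤ b.length), FB N x = 1 := by
    intro x hx
    rw [Finset.mem_filter] at hx
    exact hP.FB_eq_one hx.1 hx.2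
  rw [Finset.noncommProd_congr hsplit (fun x _ => rfl) hP.pairwise_commute]
  refine Eq.trans (Finset.noncommProd_union_of_disjoint (Finset.disjoint_filter_filter_not P P _) _ _) ?_
  rw [Finset.noncommProd_eq_pow_card _ _ _ 1 hones, one_pow, mul_one]

lemma Good.injOn_FB : Set.InjOn (FB N) (P.filter (fun b => 2 ≤ b.length)) := by
  intro b₁ hb₁ b₂ hb₂ hFB
  simp only [Finset.coe_filter, Set.mem_setOf_eq] at hb₁ hb₂
  obtain ⟨hb₁, h1⟩ := hb₁
  obtain ⟨hb₂, h2⟩ := hb₂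
  have hne : b₁.headI ∈ b₁ := hP.headI_mem hb₁
  have hx₁ : toFin N b₁.headI ∈ (FB N b₁).support := by
    rw [hP.mem_support_FB hb₁ h1, val1_toFin (hP.mem_Icc hb₁ hne)]; exact hne
  have hx₂ : toFin N b₁.headI ∈ (FB N b₂).support := by rwa [← hFB]
  rw [hP.mem_support_FB hb₂ h2, val1_toFin (hP.mem_Icc hb₁ hne)] at hx₂
  exact hP.eq_of_mem_mem hb₁ hb₂ hne hx₂

lemma Good.cycleFactorsFinset_toPerm :
    (toPerm P hP.pairwise_commute).cycleFactorsFinset =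
      (P.filter (fun b => 2 ≤ b.length)).image (FB N) := by
  rw [Equiv.Perm.cycleFactorsFinset_eq_finset]
  have hcyc : ∀ f ∈ (P.filter (fun b => 2 ≤ b.length)).image (FB N), f.IsCycle := by
    intro f hf
    obtain ⟨b, hb, rfl⟩ := Finset.mem_image.mp hf
    rw [Finset.mem_filter] at hb
    exact hP.isCycle_FB hb.1 hb.2
  have hdisj : (((P.filter (fun b => 2 ≤ b.length)).image (FB N) : Finset _) :
      Set (Equiv.Perm (Fin N))).Pairwise Equiv.Perm.Disjoint := by
    intro f₁ hf₁ f₂ hf₂ hne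
    simp only [Finset.coe_image, Set.mem_image, Finset.mem_coe] at hf₁ hf₂
    obtain ⟨b₁, hb₁, rfl⟩ := hf₁
    obtain ⟨b₂, hb₂, rfl⟩ := hf₂
    rw [Finset.mem_filter] at hb₁ hb₂
    have hbne : b₁ ≠ b₂ := fun h => hne (by rw [h])
    show ((b₁.map (toFin N)).formPerm).Disjoint ((b₂.map (toFin N)).formPerm)
    rw [List.formPerm_disjoint_iff (hP.nodup_map_toFin hb₁.1) (hP.nodup_map_toFin hb₂.1)
      (by simpa using hb₁.2) (by simpa using hb₂.2)]
    intro x hx₁ hx₂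
    rw [hP.mem_map_toFin hb₁.1] at hx₁
    rw [hP.mem_map_toFin hb₂.1] at hx₂
    exact hbne (hP.eq_of_mem_mem hb₁.1 hb₂.1 hx₁ hx₂)
  refine ⟨hcyc, hdisj, ?_⟩
  rw [noncommProd_image' _ _ _ hP.injOn_FB _
    (hP.pairwise_commute.mono (by simpa [Finset.coe_filter] using hP.subset_coe))]
  exact (hP.toPerm_eq_big).symm

lemma Good.mem_support_toPerm {x : Fin N} :
    x ∈ (toPerm P hP.pairwise_commute).support ↔ ∃ b ∈ P, 2 ≤ b.length ∧ val1 x ∈ b := by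
  constructor
  · intro hx
    have hcy := Equiv.Perm.cycleOf_mem_cycleFactorsFinset_iff.mpr hx
    rw [hP.cycleFactorsFinset_toPerm] at hcy
    obtain ⟨b, hb, hFB⟩ := Finset.mem_image.mp hcy
    rw [Finset.mem_filter] at hb
    have hxc : x ∈ (Equiv.Perm.cycleOf _ x).support :=
      Equiv.Perm.mem_support_cycleOf_iff.mpr ⟨Equiv.Perm.SameCycle.refl _ _, hx⟩
    rw [← hFB, hP.mem_support_FB hb.1 hb.2] at hxc
    exact ⟨b, hb.1, hb.2, hxc⟩
  · rintro ⟨b, hb, h2, hx⟩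
    have hmem : FB N b ∈ (toPerm P hP.pairwise_commute).cycleFactorsFinset := by
      rw [hP.cycleFactorsFinset_toPerm]
      exact Finset.mem_image_of_mem _ (Finset.mem_filter.mpr ⟨hb, h2⟩)
    exact Equiv.Perm.mem_cycleFactorsFinset_support_le hmem
      ((hP.mem_support_FB hb h2).mpr hx)

lemma Good.singleton_mem_of_not_support {x : Fin N}
    (hx : x ∉ (toPerm P hP.pairwise_commute).support) : [val1 x] ∈ P := by
  obtain ⟨b, hb, hxb⟩ := (hP.1.2.2 (val1 x)).mpr (val1_mem_Icc x)
  by_cases h2 : 2 ≤ b.length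
  · exact absurd ((hP.mem_support_toPerm).mpr ⟨b, hb, h2, hxb⟩) hx
  · obtain ⟨y, rfl⟩ := List.length_eq_one_iff.mp (hP.length_eq_one hb h2)
    simp only [List.mem_singleton] at hxb
    rwa [hxb]

lemma Good.blocksOf_toPerm : blocksOf (toPerm P hP.pairwise_commute) = P := by
  rw [blocksOf, hP.cycleFactorsFinset_toPerm, Finset.image_image]
  have h1 : (P.filter (fun b => 2 ≤ b.length)).image (bOC ∘ FB N)
      = P.filter (fun b => 2 ≤ b.length) := by
    have heq : (P.filter (fun b => 2 ≤ b.length)).image (bOC ∘ FB N)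
        = (P.filter (fun b => 2 ≤ b.length)).image id := by
      apply Finset.image_congr
      intro b hb
      simp only [Finset.coe_filter, Set.mem_setOf_eq] at hb
      exact hP.bOC_FB hb.1 hb.2
    rw [heq, Finset.image_id]
  have h2 : (toPerm P hP.pairwise_commute).supportᶜ.image (fun x => [val1 x])
      = P.filter (fun b => ¬ 2 ≤ b.length) := by
    ext l
    constructor
    · intro hl
      obtain ⟨x, hx, rfl⟩ := Finset.mem_image.mp hl
      rw [Finset.mem_compl] at hx
      refine Finset.mem_filter.mpr ⟨hP.singleton_mem_of_not_support hx, by simp⟩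
    · intro hl
      rw [Finset.mem_filter] at hl
      obtain ⟨hlP, h2⟩ := hl
      obtain ⟨y, rfl⟩ := List.length_eq_one_iff.mp (hP.length_eq_one hlP h2)
      have hy : y ∈ Finset.Icc 1 N := hP.mem_Icc hlP (List.mem_singleton_self y)
      refine Finset.mem_image.mpr ⟨toFin N y, ?_, by rw [val1_toFin hy]⟩
      rw [Finset.mem_compl, hP.mem_support_toPerm]
      rintro ⟨b, hb, hb2, hyb⟩
      rw [val1_toFin hy] at hyb
      have := hP.eq_of_mem_mem hb hlP hyb (List.mem_singleton_self y)
      subst this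
      simp at hb2
  rw [h1, h2, Finset.filter_union_filter_not_eq]

end Split

section Forward

local instance : Inhabited (Fin N) := ⟨⟨0, Nat.pos_of_ne_zero (NeZero.ne N)⟩⟩

variable {c : Equiv.Perm (Fin N)}

lemma supp_nonempty (hc : c.IsCycle) : c.support.Nonempty := by
  have := hc.two_le_card_support
  rw [← Finset.card_pos]; omega

lemma mem_bOC (hc : c.IsCycle) {y : ℕ} :
    y ∈ bOC c ↔ ∃ x ∈ c.support, val1 x = y := by
  rw [bOC, dif_pos (supp_nonempty hc)]
  simp only [List.mem_map]
  constructor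
  · rintro ⟨z, hz, rfl⟩
    rw [Equiv.Perm.mem_toList_iff] at hz
    exact ⟨z, (hz.1.mem_support_iff).mp (Finset.min'_mem _ _), rfl⟩
  · rintro ⟨x, hx, rfl⟩
    refine ⟨x, Equiv.Perm.mem_toList_iff.mpr ⟨?_, Finset.min'_mem _ _⟩, rfl⟩
    exact hc.sameCycle (Equiv.Perm.mem_support.mp (Finset.min'_mem _ _))
      (Equiv.Perm.mem_support.mp hx)

lemma length_bOC (hc : c.IsCycle) : (bOC c).length = c.support.card := by
  rw [bOC, dif_pos (supp_nonempty hc), List.length_map, Equiv.Perm.length_toList,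
    hc.cycleOf_eq (Equiv.Perm.mem_support.mp (Finset.min'_mem _ _))]

lemma nodup_bOC : (bOC c).Nodup := by
  rw [bOC]
  split
  · exact (Equiv.Perm.nodup_toList _ _).map val1_injective
  · exact List.nodup_nil

lemma ne_nil_bOC (hc : c.IsCycle) : bOC c ≠ [] := by
  have h1 := length_bOC hc
  have h2 := hc.two_le_card_support
  intro h
  rw [h] at h1
  simp at h1; omega

lemma headI_map' {α β : Type*} [Inhabited α] [Inhabited β] (f : α → β) (l : List α)
    (h : l ≠ []) : (l.map f).headI = f l.headI := by
  cases l with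
  | nil => exact absurd rfl h
  | cons a t => rfl

lemma headI_bOC (hc : c.IsCycle) :
    (bOC c).headI = val1 (c.support.min' (supp_nonempty hc)) := by
  have hm := Finset.min'_mem c.support (supp_nonempty hc)
  have hne : c.toList (c.support.min' (supp_nonempty hc)) ≠ [] := by
    rw [ne_eq, Equiv.Perm.toList_eq_nil_iff]
    simpa using hm
  rw [bOC, dif_pos (supp_nonempty hc), headI_map' _ _ hne]
  congr 1
  have h0 : 0 < (c.toList (c.support.min' (supp_nonempty hc))).length :=
    Equiv.Perm.length_toList_pos_of_mem_support _ _ hm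
  have hhead : ∀ (l : List (Fin N)) (h : 0 < l.length), l.headI = l.get ⟨0, h⟩ := by
    intro l h
    cases l with
    | nil => simp at h
    | cons a t => rfl
  rw [hhead _ h0]
  simpa using Equiv.Perm.toList_getElem_zero c _ hm

lemma weight0_bOC (hc : c.IsCycle) : blockWeight (bOC c) = 0 := by
  rw [blockWeight, List.length_eq_zero_iff, List.filter_eq_nil_iff]
  intro y hy
  rw [mem_bOC hc] at hy
  obtain ⟨x, hx, rfl⟩ := hy
  rw [headI_bOC hc]
  have := Finset.min'_le c.support x hx
  rw [Fin.le_def] at this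
  simp only [val1, decide_eq_true_eq, Bool.not_eq_true, decide_eq_false_iff_not, not_lt]
  exact decide_eq_false (by omega)

lemma blockWeight_singleton (y : ℕ) : blockWeight [y] = 0 := by
  simp [blockWeight]

lemma FB_bOC (hc : c.IsCycle) : FB N (bOC c) = c := by
  rw [FB, bOC, dif_pos (supp_nonempty hc), List.map_map]
  have hmap : (c.toList (c.support.min' (supp_nonempty hc))).map (toFin N ∘ val1)
      = c.toList (c.support.min' (supp_nonempty hc)) := by
    conv_rhs => rw [← List.map_id (c.toList (c.support.min' (supp_nonempty hc)))]
    exact List.map_congr_left fun x _ => toFin_val1 x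
  rw [hmap, Equiv.Perm.formPerm_toList,
    hc.cycleOf_eq (Equiv.Perm.mem_support.mp (Finset.min'_mem _ _))]

variable (σ : Equiv.Perm (Fin N))

lemma isCycle_of_mem_CF {c : Equiv.Perm (Fin N)} (hc : c ∈ σ.cycleFactorsFinset) : c.IsCycle :=
  (Equiv.Perm.mem_cycleFactorsFinset_iff.mp hc).1

lemma good_blocksOf : Good N (blocksOf σ) := by
  have hdisjsupp : ∀ c₁ ∈ σ.cycleFactorsFinset, ∀ c₂ ∈ σ.cycleFactorsFinset, c₁ ≠ c₂ →
      Disjoint c₁.support c₂.support := by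
    intro c₁ h₁ c₂ h₂ hne
    exact Equiv.Perm.Disjoint.disjoint_support
      (σ.cycleFactorsFinset_pairwise_disjoint h₁ h₂ hne)
  constructor
  · refine ⟨?_, ?_, ?_⟩
    · intro b hb
      rw [blocksOf, Finset.mem_union] at hb
      rcases hb with hb | hb
      · obtain ⟨cc, hcc, rfl⟩ := Finset.mem_image.mp hb
        exact ⟨ne_nil_bOC (isCycle_of_mem_CF σ hcc), nodup_bOC⟩
      · obtain ⟨x, _, rfl⟩ := Finset.mem_image.mp hb
        exact ⟨by simp, List.nodup_singleton _⟩
    · intro b₁ hb₁ b₂ hb₂ hne x hx₁ hx₂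
      rw [blocksOf, Finset.mem_union] at hb₁ hb₂
      rcases hb₁ with hb₁ | hb₁ <;> rcases hb₂ with hb₂ | hb₂
      · obtain ⟨c₁, hc₁, rfl⟩ := Finset.mem_image.mp hb₁
        obtain ⟨c₂, hc₂, rfl⟩ := Finset.mem_image.mp hb₂
        rw [mem_bOC (isCycle_of_mem_CF σ hc₁)] at hx₁
        rw [mem_bOC (isCycle_of_mem_CF σ hc₂)] at hx₂
        obtain ⟨z₁, hz₁, rfl⟩ := hx₁
        obtain ⟨z₂, hz₂, hz₂'⟩ := hx₂
        have hz := val1_injective hz₂'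
        subst hz
        have hcne : c₁ ≠ c₂ := fun h => hne (by rw [h])
        exact Finset.disjoint_left.mp (hdisjsupp c₁ hc₁ c₂ hc₂ hcne) hz₁ hz₂
      · obtain ⟨c₁, hc₁, rfl⟩ := Finset.mem_image.mp hb₁
        obtain ⟨w, hw, rfl⟩ := Finset.mem_image.mp hb₂
        rw [Finset.mem_compl] at hw
        rw [mem_bOC (isCycle_of_mem_CF σ hc₁)] at hx₁
        obtain ⟨z, hz, rfl⟩ := hx₁
        simp only [List.mem_singleton] at hx₂
        have := val1_injective hx₂
        subst this
        exact hw (Equiv.Perm.mem_cycleFactorsFinset_support_le hc₁ hz)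
      · obtain ⟨w, hw, rfl⟩ := Finset.mem_image.mp hb₁
        obtain ⟨c₂, hc₂, rfl⟩ := Finset.mem_image.mp hb₂
        rw [Finset.mem_compl] at hw
        simp only [List.mem_singleton] at hx₁
        subst hx₁
        rw [mem_bOC (isCycle_of_mem_CF σ hc₂)] at hx₂
        obtain ⟨z, hz, hz'⟩ := hx₂
        have := val1_injective hz'
        subst this
        exact hw (Equiv.Perm.mem_cycleFactorsFinset_support_le hc₂ hz)
      · obtain ⟨w₁, hw₁, rfl⟩ := Finset.mem_image.mp hb₁
        obtain ⟨w₂, hw₂, rfl⟩ := Finset.mem_image.mp hb₂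
        simp only [List.mem_singleton] at hx₁ hx₂
        subst hx₁
        exact hne (by rw [val1_injective hx₂])
    · intro y
      constructor
      · rintro ⟨b, hb, hy⟩
        rw [blocksOf, Finset.mem_union] at hb
        rcases hb with hb | hb
        · obtain ⟨cc, hcc, rfl⟩ := Finset.mem_image.mp hb
          rw [mem_bOC (isCycle_of_mem_CF σ hcc)] at hy
          obtain ⟨x, _, rfl⟩ := hy
          exact val1_mem_Icc x
        · obtain ⟨x, _, rfl⟩ := Finset.mem_image.mp hb
          simp only [List.mem_singleton] at hy
          subst hy
          exact val1_mem_Icc x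
      · intro hy
        set x := toFin N y with hx
        have hvx : val1 x = y := val1_toFin hy
        by_cases hsupp : x ∈ σ.support
        · refine ⟨bOC (σ.cycleOf x), ?_, ?_⟩
          · rw [blocksOf, Finset.mem_union]
            exact Or.inl (Finset.mem_image_of_mem _
              (Equiv.Perm.cycleOf_mem_cycleFactorsFinset_iff.mpr hsupp))
          · rw [mem_bOC (Equiv.Perm.isCycle_cycleOf σ (Equiv.Perm.mem_support.mp hsupp))]
            exact ⟨x, Equiv.Perm.mem_support_cycleOf_iff.mpr
              ⟨Equiv.Perm.SameCycle.refl _ _, hsupp⟩, hvx⟩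
        · refine ⟨[val1 x], ?_, by simp [hvx]⟩
          rw [blocksOf, Finset.mem_union]
          exact Or.inr (Finset.mem_image_of_mem _ (Finset.mem_compl.mpr hsupp))
  · rw [partitionWeight]
    apply Finset.sum_eq_zero
    intro b hb
    rw [blocksOf, Finset.mem_union] at hb
    rcases hb with hb | hb
    · obtain ⟨cc, hcc, rfl⟩ := Finset.mem_image.mp hb
      exact weight0_bOC (isCycle_of_mem_CF σ hcc)
    · obtain ⟨x, _, rfl⟩ := Finset.mem_image.mp hb
      exact blockWeight_singleton _

lemma injOn_bOC : Set.InjOn bOC (σ.cycleFactorsFinset : Set (Equiv.Perm (Fin N))) := by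
  intro c₁ h₁ c₂ h₂ heq
  rw [Finset.mem_coe] at h₁ h₂
  by_contra hne
  have hc₁ := isCycle_of_mem_CF σ h₁
  have hc₂ := isCycle_of_mem_CF σ h₂
  obtain ⟨x, hx⟩ := supp_nonempty hc₁
  have hy₁ : val1 x ∈ bOC c₁ := (mem_bOC hc₁).mpr ⟨x, hx, rfl⟩
  have hy₂ : val1 x ∈ bOC c₂ := heq ▸ hy₁
  rw [mem_bOC hc₂] at hy₂
  obtain ⟨z, hz, hz'⟩ := hy₂
  have := val1_injective hz'
  subst this
  have hd := Equiv.Perm.Disjoint.disjoint_support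
    (σ.cycleFactorsFinset_pairwise_disjoint h₁ h₂ hne)
  exact Finset.disjoint_left.mp hd hx hz

lemma disjoint_parts : Disjoint (σ.cycleFactorsFinset.image bOC)
    (σ.supportᶜ.image fun x => [val1 x]) := by
  rw [Finset.disjoint_left]
  intro l hl₁ hl₂
  obtain ⟨cc, hcc, rfl⟩ := Finset.mem_image.mp hl₁
  obtain ⟨x, _, hx⟩ := Finset.mem_image.mp hl₂
  have h1 := length_bOC (isCycle_of_mem_CF σ hcc)
  have h2 := (isCycle_of_mem_CF σ hcc).two_le_card_support
  rw [← hx] at h1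
  simp at h1; omega

lemma card_blocksOf : (blocksOf σ).card = numCycles σ := by
  have hinj2 : Set.InjOn (fun x => [val1 x])
      ((σ.supportᶜ : Finset (Fin N)) : Set (Fin N)) := by
    intro x _ y _ h
    simp only [List.cons.injEq] at h
    exact val1_injective h.1
  rw [blocksOf, Finset.card_union_of_disjoint (disjoint_parts σ),
    Finset.card_image_of_injOn (injOn_bOC σ), Finset.card_image_of_injOn hinj2,
    Finset.card_compl, Fintype.card_fin]
  have h1 : Multiset.card σ.cycleType = σ.cycleFactorsFinset.card := by
    rw [Equiv.Perm.cycleType_def, Multiset.card_map]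
    rfl
  rw [numCycles, h1, Equiv.Perm.sum_cycleType]

lemma toPerm_blocksOf : toPerm (blocksOf σ) (good_blocksOf σ).pairwise_commute = σ := by
  rw [(good_blocksOf σ).toPerm_eq_big]
  have hfilter : (blocksOf σ).filter (fun b => 2 ≤ b.length)
      = σ.cycleFactorsFinset.image bOC := by
    rw [blocksOf, Finset.filter_union]
    have hA : (σ.cycleFactorsFinset.image bOC).filter (fun b => 2 ≤ b.length)
        = σ.cycleFactorsFinset.image bOC := by
      apply Finset.filter_true_of_mem
      intro l hl
      obtain ⟨cc, hcc, rfl⟩ := Finset.mem_image.mp hl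
      rw [length_bOC (isCycle_of_mem_CF σ hcc)]
      exact (isCycle_of_mem_CF σ hcc).two_le_card_support
    have hB : (σ.supportᶜ.image fun x => [val1 x]).filter (fun b => 2 ≤ b.length)
        = ∅ := by
      apply Finset.filter_false_of_mem
      intro l hl
      obtain ⟨x, _, rfl⟩ := Finset.mem_image.mp hl
      simp
    rw [hA, hB, Finset.union_empty]
  have hcomm2 : ((σ.cycleFactorsFinset : Finset (Equiv.Perm (Fin N))) :
      Set (Equiv.Perm (Fin N))).Pairwise (Function.onFun Commute (FB N ∘ bOC)) := by
    intro c₁ h₁ c₂ h₂ hne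
    simp only [Function.onFun, Function.comp_apply]
    rw [FB_bOC (isCycle_of_mem_CF σ h₁), FB_bOC (isCycle_of_mem_CF σ h₂)]
    exact σ.cycleFactorsFinset_mem_commute h₁ h₂ hne
  rw [Finset.noncommProd_congr hfilter (fun x _ => rfl)]
  refine Eq.trans (noncommProd_image' _ _ _ (injOn_bOC σ) _ hcomm2) ?_
  refine Eq.trans ?_ (Equiv.Perm.cycleFactorsFinset_noncommProd σ)
  exact Finset.noncommProd_congr rfl (fun cc hc => FB_bOC (isCycle_of_mem_CF σ hc)) hcomm2

end Forward

lemma toPerm_congr {P₁ P₂ : Finset (List ℕ)} (h : P₁ = P₂) (c₁ c₂) :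
    toPerm (N := N) P₁ c₁ = toPerm P₂ c₂ := by
  subst h; rfl

variable (N)

theorem count_eq (M : ℕ) : weightedLah 0 N M = stirlingFirst N M := by
  rw [weightedLah, stirlingFirst, ← Nat.card_coe_set_eq]
  refine Nat.card_congr (Equiv.symm (Equiv.ofBijective
    (fun σp : {σ : Equiv.Perm (Fin N) // numCycles σ = M} =>
      (⟨blocksOf σp.1, (good_blocksOf σp.1).1, by rw [card_blocksOf]; exact σp.2,
        by rw [(good_blocksOf σp.1).2]; norm_num⟩ :
        {P : Finset (List ℕ) // IsOrderedPartition N P ∧ P.card = M ∧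
          (partitionWeight P : ℤ) = 0})) ⟨?_, ?_⟩))
  · rintro ⟨σ₁, h₁⟩ ⟨σ₂, h₂⟩ heq
    simp only [Subtype.mk.injEq] at heq ⊢
    rw [← toPerm_blocksOf σ₁, ← toPerm_blocksOf σ₂]
    exact toPerm_congr heq _ _
  · rintro ⟨P, h1, h2, h3⟩
    have hG : Good N P := ⟨h1, by exact_mod_cast h3⟩
    refine ⟨⟨toPerm P hG.pairwise_commute, ?_⟩, ?_⟩
    · rw [← card_blocksOf, hG.blocksOf_toPerm, h2]
    · simp only [Subtype.mk.injEq]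
      exact hG.blocksOf_toPerm

theorem stirling_pos {M : ℕ} (hM1 : 1 ≤ M) (hMN : M ≤ N) : 0 < stirlingFirst N M := by
  rw [stirlingFirst]
  have hne : Nonempty {σ : Equiv.Perm (Fin N) // numCycles σ = M} := by
    by_cases h : M = N
    · subst h
      exact ⟨⟨1, by simp [numCycles, Equiv.Perm.cycleType_one]⟩⟩
    · have hlt : M < N := lt_of_le_of_ne hMN h
      set l : List (Fin N) := (List.finRange N).take (N - M + 1) with hl
      have hlen : l.length = N - M + 1 := by
        rw [hl, List.length_take, List.length_finRange]
        omega
      have hnd : l.Nodup := (List.take_sublist _ _).nodup (List.nodup_finRange N)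
      have h2 : 2 ≤ l.length := by omega
      have hcyc := List.isCycle_formPerm hnd h2
      refine ⟨⟨l.formPerm, ?_⟩⟩
      have hsupp : l.formPerm.support = l.toFinset :=
        List.support_formPerm_of_nodup l hnd (fun x hx => by
          have := congrArg List.length hx
          rw [hlen] at this
          simp at this; omega)
      have hcard : l.formPerm.support.card = N - M + 1 := by
        rw [hsupp, List.card_toFinset, List.dedup_eq_self.mpr hnd, hlen]
      rw [numCycles, hcyc.cycleType, hcard]
      simp only [Multiset.coe_singleton, Multiset.card_singleton, Multiset.sum_singleton]
      omega
  exact Nat.card_pos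

end WLaux

theorem weightedLah_zero_eq_stirling (n m ℓ : ℕ) (hm : 2 ≤ m) (hmn : m ≤ n)
    (hℓ : ℓ ≤ n - m) :
    weightedLah 0 (n - 1 - ℓ) (m - 1) = stirlingFirst (n - 1 - ℓ) (m - 1) ∧
      0 < weightedLah 0 (n - 1 - ℓ) (m - 1) := by
  have hN : n - 1 - ℓ ≠ 0 := by omega
  haveI : NeZero (n - 1 - ℓ) := ⟨hN⟩
  have heq := WLaux.count_eq (n - 1 - ℓ) (m - 1)
  refine ⟨heq, ?_⟩
  rw [heq]
  exact WLaux.stirling_pos (n - 1 - ℓ) (by omega) (by omega)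
end
end

section
/- The coefficients e_{k,n,m} = (1/(n−1)!) Σ_{ℓ=0}^{k−1} W(ℓ,n,m+1) A(m,k−ℓ−1) satisfy the symmetry e_{k,n,m} = e_{n−k,n,m} for all 1 ≤ k ≤ n−1 and 1 ≤ m ≤ n−1. -/
noncomputable section

open Finset

lemma getD_ofFn {m : ℕ} (f : Fin m → ℕ) (i : ℕ) (h : i < m) :
    (List.ofFn f).getD i 0 = f ⟨i, h⟩ := by
  rw [List.getD_eq_getElem _ _ (by simpa using h)]
  simp

lemma descentCount_rev (m : ℕ) (σ : Equiv.Perm (Fin m)) :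
    descentCount m (σ.trans Fin.revPerm) = (m - 1) - descentCount m σ := by
  classical
  unfold descentCount
  have key : ∀ i ∈ Finset.range (m-1),
      ((((List.ofFn (fun j => ((σ.trans Fin.revPerm) j : ℕ))).getD (i + 1) 0) <
      ((List.ofFn (fun j => ((σ.trans Fin.revPerm) j : ℕ))).getD i 0)) ↔
      ¬ (((List.ofFn (fun j => (σ j : ℕ))).getD (i + 1) 0) <
      ((List.ofFn (fun j => (σ j : ℕ))).getD i 0))) := by
    intro i hi
    rw [Finset.mem_range] at hi
    have hi1 : i < m := by omega
    have hi2 : i + 1 < m := by omega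
    rw [getD_ofFn _ i hi1, getD_ofFn _ (i+1) hi2, getD_ofFn _ i hi1, getD_ofFn _ (i+1) hi2]
    have hne : σ ⟨i, hi1⟩ ≠ σ ⟨i+1, hi2⟩ := by
      intro h
      have := σ.injective h
      simp [Fin.ext_iff] at this
    simp only [Equiv.trans_apply, Fin.revPerm_apply, Fin.val_rev]
    have h1 : (σ ⟨i, hi1⟩ : ℕ) < m := (σ _).isLt
    have h2 : (σ ⟨i+1, hi2⟩ : ℕ) < m := (σ _).isLt
    have hne' : (σ ⟨i, hi1⟩ : ℕ) ≠ (σ ⟨i+1, hi2⟩ : ℕ) := fun h => hne (Fin.ext h)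
    omega
  rw [Finset.filter_congr key, Finset.filter_not, Finset.card_sdiff_of_subset (Finset.filter_subset _ _),
    Finset.card_range]

lemma eulerian_symm (m j : ℕ) (hj : j < m) : eulerian m j = eulerian m (m - 1 - j) := by
  unfold eulerian
  apply Nat.card_congr
  refine ⟨fun σ => ⟨σ.1.trans Fin.revPerm, ?_⟩, fun σ => ⟨σ.1.trans Fin.revPerm, ?_⟩, ?_, ?_⟩
  · rw [descentCount_rev, σ.2]
  · rw [descentCount_rev, σ.2]; omega
  · rintro ⟨σ, hσ⟩
    simp only [Subtype.mk.injEq]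
    ext i
    simp
  · rintro ⟨σ, hσ⟩
    simp only [Subtype.mk.injEq]
    ext i
    simp

lemma descentCount_le (m : ℕ) (σ : Equiv.Perm (Fin m)) : descentCount m σ ≤ m - 1 := by
  classical
  calc descentCount m σ ≤ (Finset.range (m-1)).card := Finset.card_filter_le _ _
  _ = m - 1 := Finset.card_range _

lemma eulerian_eq_zero (m j : ℕ) (hm : 1 ≤ m) (h : m ≤ j) : eulerian m j = 0 := by
  have : IsEmpty {σ : Equiv.Perm (Fin m) // descentCount m σ = j} := by
    constructor; rintro ⟨σ, hσ⟩
    have := descentCount_le m σ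
    omega
  simp [eulerian, Nat.card_of_isEmpty]

-- elements of blocks lie in Icc 1 n
lemma mem_Icc_of_mem_block {n : ℕ} {P : Finset (List ℕ)} (h : IsOrderedPartition n P)
    {b : List ℕ} (hb : b ∈ P) {x : ℕ} (hx : x ∈ b) : x ∈ Finset.Icc 1 n :=
  (h.2.2 x).mp ⟨b, hb, hx⟩

lemma sum_length {n : ℕ} {P : Finset (List ℕ)} (h : IsOrderedPartition n P) :
    ∑ b ∈ P, b.length = n := by
  classical
  have h1 : ∀ b ∈ P, b.length = b.toFinset.card := by
    intro b hb
    exact (List.toFinset_card_of_nodup (h.1 b hb).2).symm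
  rw [Finset.sum_congr rfl h1]
  have h2 : P.biUnion List.toFinset = Finset.Icc 1 n := by
    ext x
    simp only [Finset.mem_biUnion, List.mem_toFinset]
    exact h.2.2 x
  have h3 := Finset.card_biUnion (s := P) (t := List.toFinset) ?_
  · rw [← h3, h2, Nat.card_Icc]; omega
  · intro b₁ h₁ b₂ h₂ hne
    rw [Function.onFun, Finset.disjoint_left]
    intro x hx₁ hx₂
    exact h.2.1 b₁ h₁ b₂ h₂ hne x (List.mem_toFinset.mp hx₁) (List.mem_toFinset.mp hx₂)

lemma blockWeight_lt_length {b : List ℕ} (hb : b ≠ []) : blockWeight b + 1 ≤ b.length := by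
  cases b with
  | nil => exact absurd rfl hb
  | cons hd tl =>
    unfold blockWeight
    simp only [List.headI_cons, List.filter_cons, decide_eq_true_eq]
    rw [if_neg (by simp)]
    have := List.length_filter_le (fun x => decide (x < hd)) tl
    simp only [List.length_cons]
    exact Nat.succ_le_succ (List.length_filter_le _ _)

lemma weight_add_card_le {n : ℕ} {P : Finset (List ℕ)} (h : IsOrderedPartition n P) :
    partitionWeight P + P.card ≤ n := by
  classical
  have : ∑ b ∈ P, (blockWeight b + 1) ≤ ∑ b ∈ P, b.length :=
    Finset.sum_le_sum (fun b hb => blockWeight_lt_length (h.1 b hb).1)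
  rw [Finset.sum_add_distrib, Finset.sum_const, smul_eq_mul, mul_one, sum_length h] at this
  exact this

lemma weightedLah_neg {ℓ : ℤ} (hℓ : ℓ < 0) (n m : ℕ) : weightedLah ℓ n m = 0 := by
  unfold weightedLah
  have h0 : {P : Finset (List ℕ) | IsOrderedPartition n P ∧ P.card = m ∧ (partitionWeight P : ℤ) = ℓ} = ∅ := by
    rw [Set.eq_empty_iff_forall_notMem]
    rintro P ⟨-, -, hw⟩
    have : (0:ℤ) ≤ (partitionWeight P : ℤ) := Int.natCast_nonneg _
    omega
  rw [h0, Set.ncard_empty]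

lemma weightedLah_big {ℓ : ℤ} {n m : ℕ} (hℓ : (n:ℤ) - m < ℓ) : weightedLah ℓ n m = 0 := by
  unfold weightedLah
  have h0 : {P : Finset (List ℕ) | IsOrderedPartition n P ∧ P.card = m ∧ (partitionWeight P : ℤ) = ℓ} = ∅ := by
    rw [Set.eq_empty_iff_forall_notMem]
    rintro P ⟨hP, hc, hw⟩
    have h1 := weight_add_card_le hP
    rw [hc] at h1
    have : (partitionWeight P : ℤ) + m ≤ n := by exact_mod_cast h1
    omega
  rw [h0, Set.ncard_empty]

-- length split helper
lemma length_filter_split (l : List ℕ) (p : ℕ → Bool) :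
    (l.filter p).length + (l.filter (fun x => !(p x))).length = l.length := by
  induction l with
  | nil => simp
  | cons hd tl ih =>
    simp only [List.filter_cons]
    cases h : p hd <;> simp [h, List.length_cons] <;> omega

def cmap (n : ℕ) (b : List ℕ) : List ℕ := b.map (fun x => n + 1 - x)

lemma cmap_cmap {n : ℕ} {b : List ℕ} (h : ∀ x ∈ b, x ∈ Finset.Icc 1 n) :
    cmap n (cmap n b) = b := by
  unfold cmap
  rw [List.map_map]
  conv_rhs => rw [← List.map_id b]
  apply List.map_congr_left
  intro x hx
  have := h x hx
  rw [Finset.mem_Icc] at this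
  simp only [Function.comp_apply, id_eq]
  omega

lemma mem_cmap {n : ℕ} {b : List ℕ} {y : ℕ} :
    y ∈ cmap n b ↔ ∃ x ∈ b, n + 1 - x = y := by
  simp [cmap]

lemma blockWeight_cmap {n : ℕ} {b : List ℕ} (hne : b ≠ []) (hnd : b.Nodup)
    (h : ∀ x ∈ b, x ∈ Finset.Icc 1 n) :
    blockWeight (cmap n b) + blockWeight b + 1 = b.length := by
  cases b with
  | nil => exact absurd rfl hne
  | cons hd tl =>
    have hhd : hd ∈ Finset.Icc 1 n := h hd (by simp)
    rw [Finset.mem_Icc] at hhd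
    have htl : ∀ x ∈ tl, 1 ≤ x ∧ x ≤ n ∧ x ≠ hd := by
      intro x hx
      have h1 := h x (by simp [hx])
      rw [Finset.mem_Icc] at h1
      refine ⟨h1.1, h1.2, ?_⟩
      rintro rfl
      exact (List.nodup_cons.mp hnd).1 hx
    unfold cmap blockWeight
    simp only [List.map_cons, List.headI_cons, List.filter_cons, decide_eq_true_eq]
    rw [if_neg (by omega), if_neg (by simp)]
    rw [List.filter_map]
    rw [List.length_map]
    have e1 : tl.filter ((fun x => decide (x < n + 1 - hd)) ∘ (fun x => n + 1 - x))
        = tl.filter (fun x => !(decide (x < hd))) := by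
      apply List.filter_congr
      intro x hx
      have := htl x hx
      simp only [Function.comp_apply]
      rw [Bool.eq_iff_iff]
      simp only [decide_eq_true_eq, Bool.not_eq_true', decide_eq_false_iff_not, not_lt]
      omega
    rw [e1, List.length_cons]
    have := length_filter_split tl (fun x => decide (x < hd))
    rw [← this]
    exact congrArg (· + 1) (Nat.add_comm _ _)

def cpart (n : ℕ) (P : Finset (List ℕ)) : Finset (List ℕ) := P.image (cmap n)

lemma cmap_ne_nil {n : ℕ} {b : List ℕ} (h : b ≠ []) : cmap n b ≠ [] := by
  simp [cmap, h]

lemma isOP_cpart {n : ℕ} {P : Finset (List ℕ)} (h : IsOrderedPartition n P) :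
    IsOrderedPartition n (cpart n P) := by
  classical
  obtain ⟨h1, h2, h3⟩ := h
  have hmem : ∀ b ∈ P, ∀ x ∈ b, 1 ≤ x ∧ x ≤ n := by
    intro b hb x hx
    have := (h3 x).mp ⟨b, hb, hx⟩
    rwa [Finset.mem_Icc] at this
  refine ⟨?_, ?_, ?_⟩
  · intro b hb
    rw [cpart, Finset.mem_image] at hb
    obtain ⟨a, ha, rfl⟩ := hb
    refine ⟨cmap_ne_nil (h1 a ha).1, ?_⟩
    apply List.Nodup.map_on ?_ (h1 a ha).2
    intro x hx y hy hxy
    have hx' := hmem a ha x hx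
    have hy' := hmem a ha y hy
    omega
  · intro b₁ hb₁ b₂ hb₂ hne x hx₁ hx₂
    rw [cpart, Finset.mem_image] at hb₁ hb₂
    obtain ⟨a₁, ha₁, rfl⟩ := hb₁
    obtain ⟨a₂, ha₂, rfl⟩ := hb₂
    obtain ⟨y₁, hy₁, rfl⟩ := mem_cmap.mp hx₁
    obtain ⟨y₂, hy₂, hy₂e⟩ := mem_cmap.mp hx₂
    have hy₁' := hmem a₁ ha₁ y₁ hy₁
    have hy₂' := hmem a₂ ha₂ y₂ hy₂
    have : y₁ = y₂ := by omega
    subst this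
    have : a₁ = a₂ := by
      by_contra hcon
      exact h2 a₁ ha₁ a₂ ha₂ hcon y₁ hy₁ hy₂
    exact hne (by rw [this])
  · intro x
    rw [Finset.mem_Icc]
    constructor
    · rintro ⟨b, hb, hx⟩
      rw [cpart, Finset.mem_image] at hb
      obtain ⟨a, ha, rfl⟩ := hb
      obtain ⟨y, hy, rfl⟩ := mem_cmap.mp hx
      have := hmem a ha y hy
      omega
    · intro hx
      have hx' : n + 1 - x ∈ Finset.Icc 1 n := by rw [Finset.mem_Icc]; omega
      obtain ⟨a, ha, hxa⟩ := (h3 (n + 1 - x)).mpr hx'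
      refine ⟨cmap n a, by rw [cpart, Finset.mem_image]; exact ⟨a, ha, rfl⟩, ?_⟩
      rw [mem_cmap]
      exact ⟨n + 1 - x, hxa, by omega⟩

lemma cmap_injOn {n : ℕ} {P : Finset (List ℕ)} (h : IsOrderedPartition n P) :
    ∀ b₁ ∈ P, ∀ b₂ ∈ P, cmap n b₁ = cmap n b₂ → b₁ = b₂ := by
  intro b₁ hb₁ b₂ hb₂ heq
  have e1 := cmap_cmap (fun x hx => mem_Icc_of_mem_block h hb₁ hx)
  have e2 := cmap_cmap (fun x hx => mem_Icc_of_mem_block h hb₂ hx)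
  rw [← e1, heq, e2]

lemma cpart_cpart {n : ℕ} {P : Finset (List ℕ)} (h : IsOrderedPartition n P) :
    cpart n (cpart n P) = P := by
  classical
  rw [cpart, cpart, Finset.image_image]
  conv_rhs => rw [← Finset.image_id (s := P)]
  apply Finset.image_congr
  intro b hb
  simp only [Function.comp_apply, id_eq]
  exact cmap_cmap (fun x hx => mem_Icc_of_mem_block h hb hx)

lemma card_cpart {n : ℕ} {P : Finset (List ℕ)} (h : IsOrderedPartition n P) :
    (cpart n P).card = P.card := by
  classical
  rw [cpart]
  exact Finset.card_image_of_injOn (fun b₁ h₁ b₂ h₂ => cmap_injOn h b₁ h₁ b₂ h₂)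

lemma weight_cpart {n : ℕ} {P : Finset (List ℕ)} (h : IsOrderedPartition n P) :
    partitionWeight (cpart n P) + partitionWeight P + P.card = n := by
  classical
  have e1 : partitionWeight (cpart n P) = ∑ b ∈ P, blockWeight (cmap n b) := by
    rw [partitionWeight, cpart]
    exact Finset.sum_image (fun b₁ h₁ b₂ h₂ => cmap_injOn h b₁ h₁ b₂ h₂)
  rw [e1, partitionWeight, Finset.card_eq_sum_ones P, ← Finset.sum_add_distrib,
    ← Finset.sum_add_distrib]
  rw [Finset.sum_congr rfl (fun b hb => blockWeight_cmap (h.1 b hb).1 (h.1 b hb).2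
    (fun x hx => mem_Icc_of_mem_block h hb hx))]
  exact sum_length h

lemma weightedLah_symm (ℓ : ℤ) (n m : ℕ) :
    weightedLah ℓ n m = weightedLah ((n:ℤ) - m - ℓ) n m := by
  classical
  unfold weightedLah
  have himg : {P : Finset (List ℕ) | IsOrderedPartition n P ∧ P.card = m ∧
      (partitionWeight P : ℤ) = (n:ℤ) - m - ℓ} =
      cpart n '' {P : Finset (List ℕ) | IsOrderedPartition n P ∧ P.card = m ∧
      (partitionWeight P : ℤ) = ℓ} := by
    ext Q
    simp only [Set.mem_setOf_eq, Set.mem_image]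
    constructor
    · rintro ⟨hQ, hc, hw⟩
      refine ⟨cpart n Q, ⟨isOP_cpart hQ, by rw [card_cpart hQ, hc], ?_⟩, cpart_cpart hQ⟩
      have := weight_cpart hQ
      rw [hc] at this
      have : (partitionWeight (cpart n Q) : ℤ) + (partitionWeight Q : ℤ) + m = n := by
        exact_mod_cast this
      omega
    · rintro ⟨P, ⟨hP, hc, hw⟩, rfl⟩
      refine ⟨isOP_cpart hP, by rw [card_cpart hP, hc], ?_⟩
      have := weight_cpart hP
      rw [hc] at this
      have : (partitionWeight (cpart n P) : ℤ) + (partitionWeight P : ℤ) + m = n := by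
        exact_mod_cast this
      omega
  rw [himg, Set.ncard_image_of_injOn]
  intro P₁ h₁ P₂ h₂ heq
  rw [← cpart_cpart h₁.1, heq, cpart_cpart h₂.1]


def gE (m : ℕ) (j : ℤ) : ℚ := if 0 ≤ j ∧ j < (m:ℤ) then (eulerian m j.toNat : ℚ) else 0

lemma gE_symm (m : ℕ) (j : ℤ) : gE m j = gE m ((m:ℤ) - 1 - j) := by
  unfold gE
  by_cases h : 0 ≤ j ∧ j < (m:ℤ)
  · rw [if_pos h, if_pos (by omega)]
    have h1 : j.toNat < m := by omega
    have h2 : ((m:ℤ) - 1 - j).toNat = m - 1 - j.toNat := by omega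
    rw [h2, eulerian_symm m j.toNat h1]
  · rw [if_neg h, if_neg (by omega)]

lemma gE_coe (m j : ℕ) (hm : 1 ≤ m) : gE m (j:ℤ) = (eulerian m j : ℚ) := by
  unfold gE
  by_cases h : j < m
  · rw [if_pos ⟨Int.natCast_nonneg _, by exact_mod_cast h⟩, Int.toNat_natCast]
  · rw [if_neg (by omega), eulerian_eq_zero m j hm (by omega), Nat.cast_zero]

lemma sum_eq_gE (n m k' : ℕ) (hm : 1 ≤ m) (hk' : k' ≤ n) :
    ∑ ℓ ∈ Finset.range k', (weightedLah ℓ n (m+1) : ℚ) * (eulerian m (k' - ℓ - 1) : ℚ)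
      = ∑ ℓ ∈ Finset.range n, (weightedLah ℓ n (m+1) : ℚ) * gE m ((k':ℤ) - 1 - ℓ) := by
  rw [← Finset.sum_subset (Finset.range_subset_range.mpr hk')]
  · apply Finset.sum_congr rfl
    intro ℓ hℓ
    rw [Finset.mem_range] at hℓ
    congr 1
    have h1 : (k':ℤ) - 1 - ℓ = ((k' - ℓ - 1 : ℕ):ℤ) := by omega
    rw [h1, gE_coe _ _ hm]
  · intro ℓ hℓ₁ hℓ₂
    rw [Finset.mem_range, not_lt] at hℓ₂
    unfold gE
    rw [if_neg (by omega), mul_zero]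

lemma sum_gE_symm (n m k : ℕ) (hm : 1 ≤ m) (hmn : m + 1 ≤ n) (hk : k ≤ n) :
    ∑ ℓ ∈ Finset.range n, (weightedLah ℓ n (m+1) : ℚ) * gE m ((k:ℤ) - 1 - ℓ)
      = ∑ ℓ ∈ Finset.range n, (weightedLah ℓ n (m+1) : ℚ) * gE m ((n:ℤ) - k - 1 - ℓ) := by
  have step1 : ∑ ℓ ∈ Finset.range n, (weightedLah ℓ n (m+1) : ℚ) * gE m ((k:ℤ) - 1 - ℓ)
      = ∑ ℓ ∈ Finset.range n,
        (weightedLah ((n:ℤ) - ((m+1 : ℕ):ℤ) - ℓ) n (m+1) : ℚ) * gE m ((m:ℤ) - k + ℓ) := by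
    apply Finset.sum_congr rfl
    intro ℓ hℓ
    rw [weightedLah_symm (ℓ:ℤ) n (m+1)]
    congr 1
    rw [gE_symm m ((k:ℤ) - 1 - ℓ)]
    congr 1
    ring
  have step2 : ∑ ℓ ∈ Finset.range n,
        (weightedLah ((n:ℤ) - ((m+1 : ℕ):ℤ) - ℓ) n (m+1) : ℚ) * gE m ((m:ℤ) - k + ℓ)
      = ∑ ℓ ∈ Finset.range (n - m),
        (weightedLah ((n:ℤ) - ((m+1 : ℕ):ℤ) - ℓ) n (m+1) : ℚ) * gE m ((m:ℤ) - k + ℓ) := by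
    refine (Finset.sum_subset (Finset.range_subset_range.mpr (show n - m ≤ n by omega)) ?_).symm
    intro ℓ hℓ₁ hℓ₂
    rw [Finset.mem_range, not_lt] at hℓ₂
    rw [weightedLah_neg (by push_cast; omega) n (m+1), Nat.cast_zero, zero_mul]
  have step3 : ∑ ℓ ∈ Finset.range (n - m),
        (weightedLah ((n:ℤ) - ((m+1 : ℕ):ℤ) - ℓ) n (m+1) : ℚ) * gE m ((m:ℤ) - k + ℓ)
      = ∑ ℓ ∈ Finset.range (n - m),
        (weightedLah ℓ n (m+1) : ℚ) * gE m ((n:ℤ) - k - 1 - ℓ) := by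
    have hrefl := Finset.sum_range_reflect
      (fun j : ℕ => (weightedLah ((n:ℤ) - ((m+1 : ℕ):ℤ) - j) n (m+1) : ℚ) *
        gE m ((m:ℤ) - k + j)) (n - m)
    rw [← hrefl]
    apply Finset.sum_congr rfl
    intro ℓ hℓ
    rw [Finset.mem_range] at hℓ
    have c1 : ((n - m - 1 - ℓ : ℕ):ℤ) = (n:ℤ) - m - 1 - ℓ := by omega
    rw [c1]
    have c2 : (n:ℤ) - ((m+1 : ℕ):ℤ) - ((n:ℤ) - m - 1 - ℓ) = (ℓ:ℤ) := by push_cast; ring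
    have c3 : (m:ℤ) - k + ((n:ℤ) - m - 1 - ℓ) = (n:ℤ) - k - 1 - ℓ := by ring
    rw [c2, c3]
  have step4 : ∑ ℓ ∈ Finset.range (n - m),
        (weightedLah ℓ n (m+1) : ℚ) * gE m ((n:ℤ) - k - 1 - ℓ)
      = ∑ ℓ ∈ Finset.range n,
        (weightedLah ℓ n (m+1) : ℚ) * gE m ((n:ℤ) - k - 1 - ℓ) := by
    refine Finset.sum_subset (Finset.range_subset_range.mpr (show n - m ≤ n by omega)) ?_
    intro ℓ hℓ₁ hℓ₂
    rw [Finset.mem_range, not_lt] at hℓ₂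
    rw [weightedLah_big (m := m+1) (by push_cast; omega), Nat.cast_zero, zero_mul]
  rw [step1, step2, step3, step4]

theorem eCoef_symm (k n m : ℕ) (hk : 1 ≤ k) (hkn : k ≤ n - 1)
    (hm : 1 ≤ m) (hmn : m ≤ n - 1) :
    eCoef k n m = eCoef (n - k) n m := by
  have hn2 : 2 ≤ n := by omega
  have hkn' : k ≤ n := by omega
  have hnkn : n - k ≤ n := by omega
  have hmn' : m + 1 ≤ n := by omega
  unfold eCoef
  congr 1
  rw [sum_eq_gE n m k hm hkn', sum_eq_gE n m (n - k) hm hnkn,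
    sum_gE_symm n m k hm hmn' hkn']
  apply Finset.sum_congr rfl
  intro ℓ hℓ
  congr 2
  omega
end
end
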